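/- arXiv:1703.08693 — 10 statements merged into one kernel-verified Lean document; each statement's English description precedes it below -/
import Mathlib

section
/- Let (P, y) be a locally fully faithful KZ doctrine on a 2-category 𝒞 and let L : A ⟶ B be a P-admissible 1-cell, so that PL := lan_L has a right adjoint res_L; let η denote the unit of the adjunction PL ⊣ res_L. Define R_L := res_L·y_B and let φ_L : y_A ⟶ R_L·L be the composite 2-cell y_A ⟶ res_L·PL·y_A ⟶ res_L·y_B·L obtained by pasting the unit η (whiskered by y_A) with res_L whiskered on the isomorphism y_L : PL·y_A ⟶ y_B·L. Then φ_L exhibits L as an absolute left lifting of y_A through R_L. -/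
open CategoryTheory Bicategory

universe w v u

variable {𝒞 : Type u} [Bicategory.{w, v} 𝒞]

/-- A 2-cell `η : I ⟶ L ≫ R` exhibits `R` as a left extension of `I` along `L` when
pasting with `η` gives a bijection between 2-cells `R ⟶ M` and 2-cells `I ⟶ L ≫ M`. -/
def ExhibitsLeftExt {a b c : 𝒞} (L : a ⟶ b) (I : a ⟶ c) (R : b ⟶ c)
    (η : I ⟶ L ≫ R) : Prop :=
  ∀ M : b ⟶ c, Function.Bijective (fun σ : R ⟶ M => η ≫ L ◁ σ)

/-- The left extension `(R, η)` of `I` along `L` is respected by `E` when the whiskering of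
`η` by `E` exhibits `R ≫ E` as a left extension of `I ≫ E` along `L`. -/
def RespectsLeftExt {a b c d : 𝒞} (L : a ⟶ b) (I : a ⟶ c) (R : b ⟶ c)
    (η : I ⟶ L ≫ R) (E : c ⟶ d) : Prop :=
  ExhibitsLeftExt L (I ≫ E) (R ≫ E) ((η ▷ E) ≫ (α_ L R E).hom)



lemma adj_bij {x a b : 𝒞} {f : a ⟶ b} {g : b ⟶ a} (adj : Bicategory.Adjunction f g)
    (G : x ⟶ a) (H : x ⟶ b) :
    Function.Bijective (fun θ : G ≫ f ⟶ H =>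
      (ρ_ G).inv ≫ G ◁ adj.unit ≫ (α_ G f g).inv ≫ θ ▷ g) := by
  rw [Function.bijective_iff_has_inverse]
  refine ⟨fun σ => (σ ▷ f) ≫ (α_ H g f).hom ≫ (H ◁ adj.counit) ≫ (ρ_ H).hom, ?_, ?_⟩
  · intro θ
    have tri := adj.left_triangle
    dsimp only [leftZigzag] at tri
    calc ((ρ_ G).inv ≫ G ◁ adj.unit ≫ (α_ G f g).inv ≫ θ ▷ g) ▷ f ≫ (α_ H g f).hom ≫
          H ◁ adj.counit ≫ (ρ_ H).hom
        = 𝟙 (G ≫ f) ⊗≫ G ◁ adj.unit ▷ f ⊗≫ (θ ▷ (g ≫ f) ≫ H ◁ adj.counit) ⊗≫ 𝟙 H := by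
          bicategory
      _ = 𝟙 (G ≫ f) ⊗≫ G ◁ adj.unit ▷ f ⊗≫ ((G ≫ f) ◁ adj.counit ≫ θ ▷ 𝟙 b) ⊗≫ 𝟙 H := by
          rw [← whisker_exchange]
      _ = 𝟙 (G ≫ f) ⊗≫ G ◁ (adj.unit ▷ f ⊗≫ f ◁ adj.counit) ⊗≫ θ ▷ 𝟙 b ⊗≫ 𝟙 H := by
          bicategory
      _ = 𝟙 (G ≫ f) ⊗≫ G ◁ ((λ_ f).hom ≫ (ρ_ f).inv) ⊗≫ θ ▷ 𝟙 b ⊗≫ 𝟙 H := by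
          rw [tri]
      _ = θ := by bicategory
  · intro σ
    have tri := adj.right_triangle
    dsimp only [rightZigzag] at tri
    calc (ρ_ G).inv ≫ G ◁ adj.unit ≫ (α_ G f g).inv ≫
          ((σ ▷ f ≫ (α_ H g f).hom ≫ H ◁ adj.counit ≫ (ρ_ H).hom) ▷ g)
        = 𝟙 G ⊗≫ (G ◁ adj.unit ≫ σ ▷ (f ≫ g)) ⊗≫ H ◁ adj.counit ▷ g ⊗≫ 𝟙 (H ≫ g) := by
          bicategory
      _ = 𝟙 G ⊗≫ (σ ▷ 𝟙 a ≫ (H ≫ g) ◁ adj.unit) ⊗≫ H ◁ adj.counit ▷ g ⊗≫ 𝟙 (H ≫ g) := by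
          rw [whisker_exchange]
      _ = 𝟙 G ⊗≫ σ ▷ 𝟙 a ⊗≫ H ◁ (g ◁ adj.unit ⊗≫ adj.counit ▷ g) ⊗≫ 𝟙 (H ≫ g) := by
          bicategory
      _ = 𝟙 G ⊗≫ σ ▷ 𝟙 a ⊗≫ H ◁ ((ρ_ g).hom ≫ (λ_ g).inv) ⊗≫ 𝟙 (H ≫ g) := by
          rw [tri]
      _ = σ := by bicategory

lemma precomp_bij {a b : 𝒞} {u v w : a ⟶ b} (i : u ⟶ v) [IsIso i] :
    Function.Bijective (fun θ : v ⟶ w => i ≫ θ) := by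
  rw [Function.bijective_iff_has_inverse]
  exact ⟨fun θ => inv i ≫ θ, fun θ => by simp, fun θ => by simp⟩

lemma postcomp_bij {a b : 𝒞} {u v w : a ⟶ b} (i : u ⟶ v) [IsIso i] :
    Function.Bijective (fun θ : w ⟶ u => θ ≫ i) := by
  rw [Function.bijective_iff_has_inverse]
  exact ⟨fun θ => θ ≫ inv i, fun θ => by simp, fun θ => by simp⟩

/-- A 2-cell `η : I ⟶ L ≫ R` exhibits `L` as a left lifting of `I` through `R` when pasting
with `η` gives a bijection between 2-cells `L ⟶ K` and 2-cells `I ⟶ K ≫ R`. -/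
def ExhibitsLeftLift {a b c : 𝒞} (R : b ⟶ c) (I : a ⟶ c) (L : a ⟶ b)
    (η : I ⟶ L ≫ R) : Prop :=
  ∀ K : a ⟶ b, Function.Bijective (fun δ : L ⟶ K => η ≫ δ ▷ R)

/-- The left lifting is absolute when it is preserved by whiskering with any 1-cell `F`. -/
def ExhibitsAbsLeftLift {a b c : 𝒞} (R : b ⟶ c) (I : a ⟶ c) (L : a ⟶ b)
    (η : I ⟶ L ≫ R) : Prop :=
  ∀ {x : 𝒞} (F : x ⟶ a),
    ExhibitsLeftLift R (F ≫ I) (F ≫ L) ((F ◁ η) ≫ (α_ F L R).inv)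

/-- A 1-cell is (representably) fully faithful when whiskering by it is bijective on 2-cells. -/
def FullyFaithful1Cell {a b : 𝒞} (F : a ⟶ b) : Prop :=
  ∀ {x : 𝒞} (u v : x ⟶ a), Function.Bijective (fun σ : u ⟶ v => σ ▷ F)

/-- A KZ doctrine on a 2-category (Marmolejo–Wood style, in terms of left extensions). -/
structure KZDoctrine (𝒞 : Type u) [Bicategory.{w, v} 𝒞] where
  /-- action on objects -/
  P : 𝒞 → 𝒞
  /-- the units -/
  y : ∀ A : 𝒞, A ⟶ P A
  /-- chosen left extensions along the units -/
  ext : ∀ {A C : 𝒞}, (A ⟶ P C) → (P A ⟶ P C)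
  /-- the invertible 2-cells exhibiting the chosen left extensions -/
  c : ∀ {A C : 𝒞} (F : A ⟶ P C), F ≅ y A ≫ ext F
  ext_isLeftExt : ∀ {A C : 𝒞} (F : A ⟶ P C),
    ExhibitsLeftExt (y A) F (ext F) (c F).hom
  /-- (a) the identity 2-cell exhibits `𝟙 (P A)` as a left extension of `y A` along `y A` -/
  y_selfExt : ∀ A : 𝒞, ExhibitsLeftExt (y A) (y A) (𝟙 (P A)) (ρ_ (y A)).inv
  /-- (b) the chosen left extensions respect each other -/
  ext_respects : ∀ {A B C : 𝒞} (F : A ⟶ P B) (G : B ⟶ P C),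
    RespectsLeftExt (y A) F (ext F) (c F).hom (ext G)

/-- `lan L` (also denoted `PL`), the chosen left extension of `y B ∘ L` along `y A`. -/
abbrev KZDoctrine.lan (D : KZDoctrine 𝒞) {A B : 𝒞} (L : A ⟶ B) : D.P A ⟶ D.P B :=
  D.ext (L ≫ D.y B)

/-- An object `X` is `P`-cocomplete when every `G : A ⟶ X` admits a left extension along
`y A` exhibited by an invertible 2-cell, and these left extensions respect the chosen left
extensions of the KZ doctrine. -/
def PCocomplete (D : KZDoctrine 𝒞) (X : 𝒞) : Prop :=
  ∀ {A : 𝒞} (G : A ⟶ X), ∃ (Gb : D.P A ⟶ X) (cG : G ≅ D.y A ≫ Gb),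
    ExhibitsLeftExt (D.y A) G Gb cG.hom ∧
    ∀ {A' : 𝒞} (F : A' ⟶ D.P A),
      RespectsLeftExt (D.y A') F (D.ext F) (D.c F).hom Gb

/-- A 1-cell is a `P`-homomorphism when it respects all left extensions along units. -/
def PHomomorphism (D : KZDoctrine 𝒞) {X Y : 𝒞} (E : X ⟶ Y) : Prop :=
  ∀ {A : 𝒞} (G : A ⟶ X) (Gb : D.P A ⟶ X) (η : G ⟶ D.y A ≫ Gb),
    ExhibitsLeftExt (D.y A) G Gb η → RespectsLeftExt (D.y A) G Gb η E

/-- The data `(R, φ)` witnesses `P`-admissibility of `L`: `φ` exhibits `R` as a left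
extension of `y A` along `L`, and this left extension is respected by every left extension
`Hb : P A ⟶ X` along `y A` into every `P`-cocomplete object `X`. -/
def AdmissibleData (D : KZDoctrine 𝒞) {A B : 𝒞} (L : A ⟶ B) (R : B ⟶ D.P A)
    (φ : D.y A ⟶ L ≫ R) : Prop :=
  ExhibitsLeftExt L (D.y A) R φ ∧
  ∀ {X : 𝒞}, PCocomplete D X →
    ∀ (H : A ⟶ X) (Hb : D.P A ⟶ X) (cH : H ≅ D.y A ≫ Hb),
      ExhibitsLeftExt (D.y A) H Hb cH.hom → RespectsLeftExt L (D.y A) R φ Hb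

/-- A 1-cell `L` is `P`-admissible when some `(R, φ)` witnesses its admissibility. -/
def PAdmissible (D : KZDoctrine 𝒞) {A B : 𝒞} (L : A ⟶ B) : Prop :=
  ∃ (R : B ⟶ D.P A) (φ : D.y A ⟶ L ≫ R), AdmissibleData D L R φ

/-- For a locally fully faithful KZ doctrine, if `L` is `P`-admissible
(Bunge–Funk: `PL := lan L` has a right adjoint `res` with unit `adj.unit`), then the
pasting `φ_L` of the unit with `y_L` exhibits `L` as an absolute left lifting of `y A`
through `R_L := res ∘ y B`. -/
theorem stmt0 (D : KZDoctrine 𝒞) (hff : ∀ A : 𝒞, FullyFaithful1Cell (D.y A))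
    {A B : 𝒞} (L : A ⟶ B) (res : D.P B ⟶ D.P A)
    (adj : Bicategory.Adjunction (D.lan L) res) :
    ExhibitsAbsLeftLift (D.y B ≫ res) (D.y A) L
      ((ρ_ (D.y A)).inv ≫ (D.y A ◁ adj.unit) ≫ (α_ (D.y A) (D.lan L) res).inv ≫
        ((D.c (L ≫ D.y B)).inv ▷ res) ≫ (α_ L (D.y B) res).hom) := by
  unfold ExhibitsAbsLeftLift ExhibitsLeftLift
  intro x F K
  have key : (fun δ : F ≫ L ⟶ K =>
      ((F ◁ ((ρ_ (D.y A)).inv ≫ (D.y A ◁ adj.unit) ≫ (α_ (D.y A) (D.lan L) res).inv ≫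
        ((D.c (L ≫ D.y B)).inv ▷ res) ≫ (α_ L (D.y B) res).hom)) ≫
        (α_ F L (D.y B ≫ res)).inv) ≫ δ ▷ (D.y B ≫ res))
      = (fun ψ : F ≫ D.y A ⟶ K ≫ D.y B ≫ res => ψ) ∘
        ((fun ψ => ψ ≫ (α_ K (D.y B) res).hom) ∘
         ((fun θ : (F ≫ D.y A) ≫ D.lan L ⟶ K ≫ D.y B =>
            (ρ_ (F ≫ D.y A)).inv ≫ (F ≫ D.y A) ◁ adj.unit ≫
              (α_ (F ≫ D.y A) (D.lan L) res).inv ≫ θ ▷ res) ∘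
          ((fun θ : (F ≫ L) ≫ D.y B ⟶ K ≫ D.y B =>
              ((α_ F (D.y A) (D.lan L)).hom ≫ F ◁ (D.c (L ≫ D.y B)).inv ≫
                (α_ F L (D.y B)).inv) ≫ θ) ∘
           (fun δ : F ≫ L ⟶ K => δ ▷ D.y B)))) := by
    funext δ
    dsimp only [Function.comp]
    bicategory
  have hcomp : Function.Bijective ((fun ψ : F ≫ D.y A ⟶ K ≫ D.y B ≫ res => ψ) ∘
        ((fun ψ => ψ ≫ (α_ K (D.y B) res).hom) ∘
         ((fun θ : (F ≫ D.y A) ≫ D.lan L ⟶ K ≫ D.y B =>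
            (ρ_ (F ≫ D.y A)).inv ≫ (F ≫ D.y A) ◁ adj.unit ≫
              (α_ (F ≫ D.y A) (D.lan L) res).inv ≫ θ ▷ res) ∘
          ((fun θ : (F ≫ L) ≫ D.y B ⟶ K ≫ D.y B =>
              ((α_ F (D.y A) (D.lan L)).hom ≫ F ◁ (D.c (L ≫ D.y B)).inv ≫
                (α_ F L (D.y B)).inv) ≫ θ) ∘
           (fun δ : F ≫ L ⟶ K => δ ▷ D.y B))))) := by
    refine Function.Bijective.comp (Function.bijective_id) ?_
    refine Function.Bijective.comp (postcomp_bij _) ?_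
    refine Function.Bijective.comp (adj_bij adj _ _) ?_
    exact Function.Bijective.comp (precomp_bij _) (hff B (F ≫ L) K)
  rw [key]
  exact hcomp
end

section
/- Let (P, y) be a KZ doctrine on a 2-category 𝒞 and let L : A ⟶ B and K : B ⟶ C be P-admissible 1-cells, with chosen left extensions (R_L, φ_L) of y_A along L and (R_K, φ_K) of y_B along K, and let c_{R_L} be the invertible 2-cell exhibiting res_L := \overline{R_L} as the left extension of R_L along y_B. Then the pasting of φ_L, c_{R_L} and φ_K exhibits res_L·R_K as a left extension of y_A along K·L. -/
open CategoryTheory Bicategory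

universe w v u

variable {𝒞 : Type u} [Bicategory.{w, v} 𝒞]

lemma PCocomplete_P (D : KZDoctrine 𝒞) (A : 𝒞) : PCocomplete D (D.P A) := by
  intro A' G
  exact ⟨D.ext G, D.c G, D.ext_isLeftExt G, fun F => D.ext_respects F G⟩

lemma comp_left_bij {a b : 𝒞} {u v w : a ⟶ b} (e : u ≅ v) :
    Function.Bijective (fun ρ : v ⟶ w => e.hom ≫ ρ) := by
  constructor
  · intro x y h
    simpa using congrArg (fun ρ => e.inv ≫ ρ) h
  · intro ρ; exact ⟨e.inv ≫ ρ, by simp⟩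

lemma comp_right_bij {a b : 𝒞} {u v w : a ⟶ b} (e : v ≅ w) :
    Function.Bijective (fun ρ : u ⟶ v => ρ ≫ e.hom) := by
  constructor
  · intro x y h
    simpa using congrArg (fun ρ => ρ ≫ e.inv) h
  · intro ρ; exact ⟨ρ ≫ e.inv, by simp⟩

/-- For `P`-admissible `L` and `K`, the pasting of `φ_L`, `c_{R_L}` and
`φ_K` exhibits `res_L ∘ R_K = R_K ≫ D.ext R_L` as a left extension of `y A`
along `K ∘ L = L ≫ K`. -/
theorem stmt1 (D : KZDoctrine 𝒞) {A B C : 𝒞} (L : A ⟶ B) (K : B ⟶ C)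
    (RL : B ⟶ D.P A) (φL : D.y A ⟶ L ≫ RL) (hL : AdmissibleData D L RL φL)
    (RK : C ⟶ D.P B) (φK : D.y B ⟶ K ≫ RK) (hK : AdmissibleData D K RK φK) :
    ExhibitsLeftExt (L ≫ K) (D.y A) (RK ≫ D.ext RL)
      (φL ≫ (L ◁ (D.c RL).hom) ≫ (L ◁ (φK ▷ D.ext RL)) ≫
        (L ◁ (α_ K RK (D.ext RL)).hom) ≫ (α_ L K (RK ≫ D.ext RL)).inv) := by
  intro M
  have hP : PCocomplete D (D.P A) := PCocomplete_P D A
  have hresp : RespectsLeftExt K (D.y B) RK φK (D.ext RL) :=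
    hK.2 hP RL (D.ext RL) (D.c RL) (D.ext_isLeftExt RL)
  have h1 : Function.Bijective
      (fun σ : RK ≫ D.ext RL ⟶ M =>
        ((φK ▷ D.ext RL) ≫ (α_ K RK (D.ext RL)).hom) ≫ K ◁ σ) := hresp M
  have h2 : Function.Bijective
      (fun ρ : D.y B ≫ D.ext RL ⟶ K ≫ M => (D.c RL).hom ≫ ρ) :=
    comp_left_bij (D.c RL)
  have h3 : Function.Bijective
      (fun τ : RL ⟶ K ≫ M => φL ≫ L ◁ τ) := hL.1 (K ≫ M)
  have h4 : Function.Bijective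
      (fun δ : D.y A ⟶ L ≫ (K ≫ M) => δ ≫ (α_ L K M).inv) :=
    comp_right_bij (α_ L K M).symm
  have key : (fun σ : RK ≫ D.ext RL ⟶ M =>
      (φL ≫ (L ◁ (D.c RL).hom) ≫ (L ◁ (φK ▷ D.ext RL)) ≫
        (L ◁ (α_ K RK (D.ext RL)).hom) ≫ (α_ L K (RK ≫ D.ext RL)).inv) ≫
        (L ≫ K) ◁ σ) =
      (fun δ : D.y A ⟶ L ≫ (K ≫ M) => δ ≫ (α_ L K M).inv) ∘
      (fun τ : RL ⟶ K ≫ M => φL ≫ L ◁ τ) ∘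
      (fun ρ : D.y B ≫ D.ext RL ⟶ K ≫ M => (D.c RL).hom ≫ ρ) ∘
      (fun σ : RK ≫ D.ext RL ⟶ M =>
        ((φK ▷ D.ext RL) ≫ (α_ K RK (D.ext RL)).hom) ≫ K ◁ σ) := by
    funext σ
    simp only [Function.comp_apply, Bicategory.whiskerLeft_comp, Category.assoc]
    congr 1
    congr 2
    rw [← Bicategory.associator_inv_naturality_right]
  rw [key]
  exact h4.comp (h3.comp (h2.comp h1))
end

section
/- Let (P, y) be a KZ doctrine on a 2-category 𝒞 and let L : A ⟶ B be a P-admissible 1-cell with left extension (R_L, φ_L) of y_A along L, and suppose the object B is P-cocomplete. Then R_L : B ⟶ PA has a left adjoint L̄ ⊣ R_L, where L̄ : PA ⟶ B is the left extension of L along y_A (exhibited by an invertible 2-cell c_L, which exists since B is P-cocomplete). -/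
open CategoryTheory Bicategory

universe w v u

variable {𝒞 : Type u} [Bicategory.{w, v} 𝒞]

/-- If `L : A ⟶ B` is `P`-admissible with left extension `(R_L, φ_L)` and
`B` is `P`-cocomplete, then `R_L` has a left adjoint `L̄`, where `L̄` is the left
extension of `L` along `y A` exhibited by an invertible 2-cell `c_L`. -/
theorem stmt2 (D : KZDoctrine 𝒞) {A B : 𝒞} (L : A ⟶ B)
    (RL : B ⟶ D.P A) (φL : D.y A ⟶ L ≫ RL) (hL : AdmissibleData D L RL φL)
    (hB : PCocomplete D B)
    (Lb : D.P A ⟶ B) (cL : L ≅ D.y A ≫ Lb)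
    (hLb : ExhibitsLeftExt (D.y A) L Lb cL.hom) :
    Nonempty (Bicategory.Adjunction Lb RL) := by
  -- the unit, obtained from the universal property of `𝟙 (P A)` as a left extension
  -- of `y A` along `y A`
  obtain ⟨η, hη⟩ := (D.y_selfExt A (Lb ≫ RL)).2
    (φL ≫ cL.hom ▷ RL ≫ (α_ (D.y A) Lb RL).hom)
  dsimp only at hη
  -- the counit, obtained from the fact that `Lb` respects the left extension `(RL, φL)`
  have hres : RespectsLeftExt L (D.y A) RL φL Lb := hL.2 hB L Lb cL hLb
  obtain ⟨eps, heps⟩ := (hres (𝟙 B)).2 (cL.inv ≫ (ρ_ L).inv)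
  dsimp only at heps
  -- the left triangle identity
  have keyL : cL.hom ≫ D.y A ◁
      ((λ_ Lb).inv ≫ η ▷ Lb ≫ (α_ Lb RL Lb).hom ≫ Lb ◁ eps ≫ (ρ_ Lb).hom) =
      cL.hom ≫ D.y A ◁ (𝟙 Lb) := by
    calc cL.hom ≫ D.y A ◁
        ((λ_ Lb).inv ≫ η ▷ Lb ≫ (α_ Lb RL Lb).hom ≫ Lb ◁ eps ≫ (ρ_ Lb).hom)
        = cL.hom ⊗≫ (((ρ_ (D.y A)).inv ≫ D.y A ◁ η) ▷ Lb) ⊗≫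
            D.y A ◁ (Lb ◁ eps) ⊗≫ 𝟙 _ := by
          bicategory
      _ = cL.hom ⊗≫ ((φL ≫ cL.hom ▷ RL ≫ (α_ (D.y A) Lb RL).hom) ▷ Lb) ⊗≫
            D.y A ◁ (Lb ◁ eps) ⊗≫ 𝟙 _ := by
          rw [hη]
      _ = cL.hom ⊗≫ (φL ▷ Lb ≫ (α_ L RL Lb).hom) ⊗≫
            (cL.hom ▷ (RL ≫ Lb) ≫ (D.y A ≫ Lb) ◁ eps) ⊗≫ 𝟙 _ := by
          bicategory
      _ = cL.hom ⊗≫ (φL ▷ Lb ≫ (α_ L RL Lb).hom) ⊗≫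
            (L ◁ eps ≫ cL.hom ▷ 𝟙 B) ⊗≫ 𝟙 _ := by
          rw [← whisker_exchange]
      _ = cL.hom ⊗≫ (((φL ▷ Lb) ≫ (α_ L RL Lb).hom) ≫ L ◁ eps) ⊗≫
            (cL.hom ▷ 𝟙 B) ⊗≫ 𝟙 _ := by
          bicategory
      _ = cL.hom ⊗≫ (cL.inv ≫ (ρ_ L).inv) ⊗≫ (cL.hom ▷ 𝟙 B) ⊗≫ 𝟙 _ := by
          rw [heps]
      _ = cL.hom ≫ cL.inv ≫ cL.hom := by
          bicategory
      _ = cL.hom ≫ D.y A ◁ (𝟙 Lb) := by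
          simp
  have hT : (λ_ Lb).inv ≫ η ▷ Lb ≫ (α_ Lb RL Lb).hom ≫ Lb ◁ eps ≫ (ρ_ Lb).hom
      = 𝟙 Lb := (hLb Lb).1 keyL
  -- the right triangle identity
  have keyR : φL ≫ L ◁
      ((ρ_ RL).inv ≫ RL ◁ η ≫ (α_ RL Lb RL).inv ≫ eps ▷ RL ≫ (λ_ RL).hom) =
      φL ≫ L ◁ (𝟙 RL) := by
    calc φL ≫ L ◁
        ((ρ_ RL).inv ≫ RL ◁ η ≫ (α_ RL Lb RL).inv ≫ eps ▷ RL ≫ (λ_ RL).hom)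
        = 𝟙 _ ⊗≫ (φL ▷ 𝟙 (D.P A) ≫ (L ≫ RL) ◁ η) ⊗≫ L ◁ (eps ▷ RL) ⊗≫ 𝟙 _ := by
          bicategory
      _ = 𝟙 _ ⊗≫ (((ρ_ (D.y A)).inv ≫ D.y A ◁ η) ≫ φL ▷ (Lb ≫ RL)) ⊗≫
            L ◁ (eps ▷ RL) ⊗≫ 𝟙 _ := by
          rw [← whisker_exchange]; bicategory
      _ = 𝟙 _ ⊗≫ ((φL ≫ cL.hom ▷ RL ≫ (α_ (D.y A) Lb RL).hom) ≫
            φL ▷ (Lb ≫ RL)) ⊗≫ L ◁ (eps ▷ RL) ⊗≫ 𝟙 _ := by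
          rw [hη]
      _ = φL ⊗≫ (cL.hom ▷ RL) ⊗≫
            ((((φL ▷ Lb) ≫ (α_ L RL Lb).hom) ≫ L ◁ eps) ▷ RL) ⊗≫ 𝟙 _ := by
          bicategory
      _ = φL ⊗≫ (cL.hom ▷ RL) ⊗≫ ((cL.inv ≫ (ρ_ L).inv) ▷ RL) ⊗≫ 𝟙 _ := by
          rw [heps]
      _ = φL ⊗≫ ((cL.hom ≫ cL.inv) ▷ RL) ⊗≫ 𝟙 _ := by
          bicategory
      _ = φL ≫ L ◁ (𝟙 RL) := by
          rw [Iso.hom_inv_id]; bicategory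
  have hS : (ρ_ RL).inv ≫ RL ◁ η ≫ (α_ RL Lb RL).inv ≫ eps ▷ RL ≫ (λ_ RL).hom
      = 𝟙 RL := (hL.1 RL).1 keyR
  refine ⟨⟨η, eps, ?_, ?_⟩⟩
  · calc leftZigzag η eps
        = (λ_ Lb).hom ≫
            ((λ_ Lb).inv ≫ η ▷ Lb ≫ (α_ Lb RL Lb).hom ≫ Lb ◁ eps ≫ (ρ_ Lb).hom) ≫
            (ρ_ Lb).inv := by
          bicategory
      _ = (λ_ Lb).hom ≫ (ρ_ Lb).inv := by rw [hT]; simp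
  · calc rightZigzag η eps
        = (ρ_ RL).hom ≫
            ((ρ_ RL).inv ≫ RL ◁ η ≫ (α_ RL Lb RL).inv ≫ eps ▷ RL ≫ (λ_ RL).hom) ≫
            (λ_ RL).inv := by
          bicategory
      _ = (ρ_ RL).hom ≫ (λ_ RL).inv := by rw [hS]; simp
end

section
/- Let (P, y) be a KZ doctrine on a 2-category 𝒞 and let L : A ⟶ B be a P-admissible 1-cell with left extension (R_L, φ_L) of y_A along L. Let res_L : PB ⟶ PA denote the left extension of R_L along y_B (exhibited by the invertible 2-cell c_{R_L}). Then: (i) res_L has a left adjoint lan_L, given by the left extension of y_B·L along y_A; and (ii) if moreover R_L is P-admissible, then res_L has a right adjoint ran_L := R_{R_L}, the left extension of y_B along R_L. -/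
open CategoryTheory Bicategory

universe w v u

variable {𝒞 : Type u} [Bicategory.{w, v} 𝒞]

/-- Every object of the form `P B` is `P`-cocomplete. -/
theorem pCocomplete_P (D : KZDoctrine 𝒞) (B : 𝒞) : PCocomplete D (D.P B) :=
  fun G => ⟨D.ext G, D.c G, D.ext_isLeftExt G, fun F => D.ext_respects F G⟩

/-- Abstract construction of the adjunction `lan L ⊣ res L` (part (i)). -/
theorem adj_aux1 {X S PA PB : 𝒞} (yA : X ⟶ PA) (yB : S ⟶ PB) (L : X ⟶ S) (RL : S ⟶ PA)
    (f : PA ⟶ PB) (g : PB ⟶ PA)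
    (κ : L ≫ yB ≅ yA ≫ f) (θ : RL ≅ yB ≫ g) (φ : yA ⟶ L ≫ RL)
    (hf : ExhibitsLeftExt yA (L ≫ yB) f κ.hom)
    (hg : ExhibitsLeftExt yB RL g θ.hom)
    (hφ : ExhibitsLeftExt L yA RL φ)
    (hid : ExhibitsLeftExt yA yA (𝟙 PA) (ρ_ yA).inv)
    (h₁ : ExhibitsLeftExt L (yA ≫ f) (RL ≫ f) (φ ▷ f ≫ (α_ L RL f).hom))
    (h₂ : ExhibitsLeftExt yB (RL ≫ f) (g ≫ f) (θ.hom ▷ f ≫ (α_ yB g f).hom)) :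
    Nonempty (Bicategory.Adjunction f g) := by
  obtain ⟨ε₀, E1⟩ := (h₁ yB).2 κ.inv
  replace E1 : (φ ▷ f ≫ (α_ L RL f).hom) ≫ L ◁ ε₀ = κ.inv := E1
  obtain ⟨ε', E2⟩ := (h₂ (𝟙 PB)).2 (ε₀ ≫ (ρ_ yB).inv)
  replace E2 : (θ.hom ▷ f ≫ (α_ yB g f).hom) ≫ yB ◁ ε' = ε₀ ≫ (ρ_ yB).inv := E2
  obtain ⟨η, E3⟩ := (hid (f ≫ g)).2
    (φ ≫ L ◁ θ.hom ≫ (α_ L yB g).inv ≫ κ.hom ▷ g ≫ (α_ yA f g).hom)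
  replace E3 : (ρ_ yA).inv ≫ yA ◁ η
      = φ ≫ L ◁ θ.hom ≫ (α_ L yB g).inv ≫ κ.hom ▷ g ≫ (α_ yA f g).hom := E3
  have E3' : yA ◁ η
      = (ρ_ yA).hom ≫ (φ ≫ L ◁ θ.hom ≫ (α_ L yB g).inv ≫ κ.hom ▷ g ≫ (α_ yA f g).hom) := by
    rw [← E3]; simp
  refine ⟨⟨η, ε', ?_, ?_⟩⟩
  · -- left triangle
    have key : (λ_ f).inv ≫ leftZigzag η ε' ≫ (ρ_ f).hom = 𝟙 f := by
      apply (hf f).1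
      dsimp only
      calc κ.hom ≫ yA ◁ ((λ_ f).inv ≫ leftZigzag η ε' ≫ (ρ_ f).hom)
          = κ.hom ⊗≫ (yA ◁ η) ▷ f ⊗≫ (yA ≫ f) ◁ ε' ⊗≫ 𝟙 (yA ≫ f) := by
            dsimp only [leftZigzag]; bicategory
        _ = κ.hom ⊗≫ ((ρ_ yA).hom ≫ (φ ≫ L ◁ θ.hom ≫ (α_ L yB g).inv ≫ κ.hom ▷ g ≫
              (α_ yA f g).hom)) ▷ f ⊗≫ (yA ≫ f) ◁ ε' ⊗≫ 𝟙 (yA ≫ f) := by rw [E3']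
        _ = κ.hom ⊗≫ φ ▷ f ⊗≫ (L ◁ θ.hom) ▷ f ⊗≫
              (κ.hom ▷ (g ≫ f) ≫ (yA ≫ f) ◁ ε') ⊗≫ 𝟙 (yA ≫ f) := by bicategory
        _ = κ.hom ⊗≫ φ ▷ f ⊗≫ (L ◁ θ.hom) ▷ f ⊗≫
              ((L ≫ yB) ◁ ε' ≫ κ.hom ▷ 𝟙 PB) ⊗≫ 𝟙 (yA ≫ f) := by rw [← whisker_exchange]
        _ = κ.hom ⊗≫ φ ▷ f ⊗≫
              L ◁ ((θ.hom ▷ f ≫ (α_ yB g f).hom) ≫ yB ◁ ε') ⊗≫ κ.hom ▷ 𝟙 PB ⊗≫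
              𝟙 (yA ≫ f) := by bicategory
        _ = κ.hom ⊗≫ φ ▷ f ⊗≫ L ◁ (ε₀ ≫ (ρ_ yB).inv) ⊗≫ κ.hom ▷ 𝟙 PB ⊗≫ 𝟙 (yA ≫ f) := by
            rw [E2]
        _ = κ.hom ≫ (((φ ▷ f ≫ (α_ L RL f).hom) ≫ L ◁ ε₀) ≫ (κ.hom ≫ yA ◁ 𝟙 f)) := by
            bicategory
        _ = κ.hom ≫ yA ◁ 𝟙 f := by rw [E1]; simp
    calc leftZigzag η ε'
        = (λ_ f).hom ≫ ((λ_ f).inv ≫ leftZigzag η ε' ≫ (ρ_ f).hom) ≫ (ρ_ f).inv := by simp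
      _ = (λ_ f).hom ≫ (ρ_ f).inv := by rw [key]; simp
  · -- right triangle
    have key : (ρ_ g).inv ≫ rightZigzag η ε' ≫ (λ_ g).hom = 𝟙 g := by
      apply (hg g).1
      dsimp only
      apply (hφ (yB ≫ g)).1
      dsimp only
      calc φ ≫ L ◁ (θ.hom ≫ yB ◁ ((ρ_ g).inv ≫ rightZigzag η ε' ≫ (λ_ g).hom))
          = φ ⊗≫ L ◁ (θ.hom ▷ 𝟙 PA ≫ (yB ≫ g) ◁ η) ⊗≫ L ◁ (yB ◁ (ε' ▷ g)) ⊗≫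
              𝟙 (L ≫ yB ≫ g) := by
            dsimp only [rightZigzag]; bicategory
        _ = φ ⊗≫ L ◁ (RL ◁ η ≫ θ.hom ▷ (f ≫ g)) ⊗≫ L ◁ (yB ◁ (ε' ▷ g)) ⊗≫
              𝟙 (L ≫ yB ≫ g) := by rw [← whisker_exchange]
        _ = 𝟙 yA ⊗≫ (φ ▷ 𝟙 PA ≫ (L ≫ RL) ◁ η) ⊗≫
              L ◁ (((θ.hom ▷ f ≫ (α_ yB g f).hom) ≫ yB ◁ ε') ▷ g) ⊗≫
              𝟙 (L ≫ yB ≫ g) := by bicategory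
        _ = 𝟙 yA ⊗≫ (φ ▷ 𝟙 PA ≫ (L ≫ RL) ◁ η) ⊗≫
              L ◁ ((ε₀ ≫ (ρ_ yB).inv) ▷ g) ⊗≫ 𝟙 (L ≫ yB ≫ g) := by rw [E2]
        _ = 𝟙 yA ⊗≫ (yA ◁ η ≫ φ ▷ (f ≫ g)) ⊗≫
              L ◁ ((ε₀ ≫ (ρ_ yB).inv) ▷ g) ⊗≫ 𝟙 (L ≫ yB ≫ g) := by rw [← whisker_exchange]
        _ = 𝟙 yA ⊗≫ (((ρ_ yA).hom ≫ (φ ≫ L ◁ θ.hom ≫ (α_ L yB g).inv ≫ κ.hom ▷ g ≫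
              (α_ yA f g).hom)) ≫ φ ▷ (f ≫ g)) ⊗≫
              L ◁ ((ε₀ ≫ (ρ_ yB).inv) ▷ g) ⊗≫ 𝟙 (L ≫ yB ≫ g) := by rw [E3']
        _ = φ ⊗≫ L ◁ θ.hom ⊗≫
              (κ.hom ≫ ((φ ▷ f ≫ (α_ L RL f).hom) ≫ L ◁ ε₀)) ▷ g ⊗≫
              𝟙 (L ≫ yB ≫ g) := by bicategory
        _ = φ ⊗≫ L ◁ θ.hom ⊗≫ (κ.hom ≫ κ.inv) ▷ g ⊗≫ 𝟙 (L ≫ yB ≫ g) := by rw [E1]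
        _ = φ ≫ L ◁ (θ.hom ≫ yB ◁ 𝟙 g) := by rw [Iso.hom_inv_id]; bicategory
    calc rightZigzag η ε'
        = (ρ_ g).hom ≫ ((ρ_ g).inv ≫ rightZigzag η ε' ≫ (λ_ g).hom) ≫ (λ_ g).inv := by simp
      _ = (ρ_ g).hom ≫ (λ_ g).inv := by rw [key]; simp

/-- Abstract construction of the adjunction `res L ⊣ ran L` (part (ii)). -/
theorem adj_aux2 {S PA PB : 𝒞} (yB : S ⟶ PB) (RL : S ⟶ PA) (f : PB ⟶ PA) (g : PA ⟶ PB)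
    (θ : RL ≅ yB ≫ f) (φ : yB ⟶ RL ≫ g)
    (hf : ExhibitsLeftExt yB RL f θ.hom)
    (hφ : ExhibitsLeftExt RL yB g φ)
    (hid : ExhibitsLeftExt yB yB (𝟙 PB) (ρ_ yB).inv)
    (h₁ : ExhibitsLeftExt RL (yB ≫ f) (g ≫ f) (φ ▷ f ≫ (α_ RL g f).hom)) :
    Nonempty (Bicategory.Adjunction f g) := by
  obtain ⟨ε', E1⟩ := (h₁ (𝟙 PA)).2 (θ.inv ≫ (ρ_ RL).inv)
  replace E1 : (φ ▷ f ≫ (α_ RL g f).hom) ≫ RL ◁ ε' = θ.inv ≫ (ρ_ RL).inv := E1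
  obtain ⟨η, E3⟩ := (hid (f ≫ g)).2 (φ ≫ θ.hom ▷ g ≫ (α_ yB f g).hom)
  replace E3 : (ρ_ yB).inv ≫ yB ◁ η = φ ≫ θ.hom ▷ g ≫ (α_ yB f g).hom := E3
  have E3' : yB ◁ η = (ρ_ yB).hom ≫ (φ ≫ θ.hom ▷ g ≫ (α_ yB f g).hom) := by
    rw [← E3]; simp
  refine ⟨⟨η, ε', ?_, ?_⟩⟩
  · -- left triangle
    have key : (λ_ f).inv ≫ leftZigzag η ε' ≫ (ρ_ f).hom = 𝟙 f := by
      apply (hf f).1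
      dsimp only
      calc θ.hom ≫ yB ◁ ((λ_ f).inv ≫ leftZigzag η ε' ≫ (ρ_ f).hom)
          = θ.hom ⊗≫ (yB ◁ η) ▷ f ⊗≫ (yB ≫ f) ◁ ε' ⊗≫ 𝟙 (yB ≫ f) := by
            dsimp only [leftZigzag]; bicategory
        _ = θ.hom ⊗≫ ((ρ_ yB).hom ≫ (φ ≫ θ.hom ▷ g ≫ (α_ yB f g).hom)) ▷ f ⊗≫
              (yB ≫ f) ◁ ε' ⊗≫ 𝟙 (yB ≫ f) := by rw [E3']
        _ = θ.hom ⊗≫ φ ▷ f ⊗≫ (θ.hom ▷ (g ≫ f) ≫ (yB ≫ f) ◁ ε') ⊗≫ 𝟙 (yB ≫ f) := by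
            bicategory
        _ = θ.hom ⊗≫ φ ▷ f ⊗≫ (RL ◁ ε' ≫ θ.hom ▷ 𝟙 PA) ⊗≫ 𝟙 (yB ≫ f) := by
            rw [← whisker_exchange]
        _ = θ.hom ≫ (((φ ▷ f ≫ (α_ RL g f).hom) ≫ RL ◁ ε') ≫
              ((ρ_ RL).hom ≫ θ.hom ≫ yB ◁ 𝟙 f)) := by bicategory
        _ = θ.hom ≫ yB ◁ 𝟙 f := by rw [E1]; simp
    calc leftZigzag η ε'
        = (λ_ f).hom ≫ ((λ_ f).inv ≫ leftZigzag η ε' ≫ (ρ_ f).hom) ≫ (ρ_ f).inv := by simp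
      _ = (λ_ f).hom ≫ (ρ_ f).inv := by rw [key]; simp
  · -- right triangle
    have key : (ρ_ g).inv ≫ rightZigzag η ε' ≫ (λ_ g).hom = 𝟙 g := by
      apply (hφ g).1
      dsimp only
      calc φ ≫ RL ◁ ((ρ_ g).inv ≫ rightZigzag η ε' ≫ (λ_ g).hom)
          = 𝟙 yB ⊗≫ (φ ▷ 𝟙 PB ≫ (RL ≫ g) ◁ η) ⊗≫ RL ◁ (ε' ▷ g) ⊗≫ 𝟙 (RL ≫ g) := by
            dsimp only [rightZigzag]; bicategory
        _ = 𝟙 yB ⊗≫ (yB ◁ η ≫ φ ▷ (f ≫ g)) ⊗≫ RL ◁ (ε' ▷ g) ⊗≫ 𝟙 (RL ≫ g) := by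
            rw [← whisker_exchange]
        _ = 𝟙 yB ⊗≫ (((ρ_ yB).hom ≫ (φ ≫ θ.hom ▷ g ≫ (α_ yB f g).hom)) ≫ φ ▷ (f ≫ g)) ⊗≫
              RL ◁ (ε' ▷ g) ⊗≫ 𝟙 (RL ≫ g) := by rw [E3']
        _ = φ ⊗≫ θ.hom ▷ g ⊗≫ (((φ ▷ f ≫ (α_ RL g f).hom) ≫ RL ◁ ε') ▷ g) ⊗≫
              𝟙 (RL ≫ g) := by bicategory
        _ = φ ⊗≫ θ.hom ▷ g ⊗≫ ((θ.inv ≫ (ρ_ RL).inv) ▷ g) ⊗≫ 𝟙 (RL ≫ g) := by rw [E1]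
        _ = φ ⊗≫ ((θ.hom ≫ θ.inv) ▷ g) ⊗≫ 𝟙 (RL ≫ g) := by bicategory
        _ = φ ≫ RL ◁ 𝟙 g := by rw [Iso.hom_inv_id]; bicategory
    calc rightZigzag η ε'
        = (ρ_ g).hom ≫ ((ρ_ g).inv ≫ rightZigzag η ε' ≫ (λ_ g).hom) ≫ (λ_ g).inv := by simp
      _ = (ρ_ g).hom ≫ (λ_ g).inv := by rw [key]; simp

/-- For `P`-admissible `L` with left extension `(R_L, φ_L)`, the 1-cell
`res_L := D.ext R_L` (the left extension of `R_L` along `y B`, exhibited by `c_{R_L}`)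
(i) has a left adjoint `lan_L := D.ext (L ≫ y B)`, and (ii) if `R_L` is `P`-admissible
then `res_L` has a right adjoint `ran_L := R_{R_L}`, the left extension of `y B`
along `R_L`. -/
theorem stmt3 (D : KZDoctrine 𝒞) {A B : 𝒞} (L : A ⟶ B)
    (RL : B ⟶ D.P A) (φL : D.y A ⟶ L ≫ RL) (hL : AdmissibleData D L RL φL) :
    Nonempty (Bicategory.Adjunction (D.lan L) (D.ext RL)) ∧
    (∀ (RRL : D.P A ⟶ D.P B) (φRL : D.y B ⟶ RL ≫ RRL),
      AdmissibleData D RL RRL φRL →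
        Nonempty (Bicategory.Adjunction (D.ext RL) RRL)) := by
  constructor
  · exact adj_aux1 (D.y A) (D.y B) L RL (D.lan L) (D.ext RL) (D.c (L ≫ D.y B)) (D.c RL) φL
      (D.ext_isLeftExt (L ≫ D.y B)) (D.ext_isLeftExt RL) hL.1 (D.y_selfExt A)
      (hL.2 (pCocomplete_P D B) (L ≫ D.y B) (D.lan L) (D.c (L ≫ D.y B))
        (D.ext_isLeftExt (L ≫ D.y B)))
      (D.ext_respects RL (L ≫ D.y B))
  · intro RRL φRL hR
    exact adj_aux2 (D.y B) RL (D.ext RL) RRL (D.c RL) φRL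
      (D.ext_isLeftExt RL) hR.1 (D.y_selfExt B)
      (hR.2 (pCocomplete_P D A) RL (D.ext RL) (D.c RL) (D.ext_isLeftExt RL))
end

section
/- Let (P, y) be a KZ doctrine on a 2-category 𝒞. If a 1-cell L : A ⟶ B is P-admissible, then the composite y_B·L : A ⟶ PB is P-admissible; its left extension of y_A along y_B·L is given by res_L, the left extension of R_L along y_B, exhibited by the pasting of φ_L with c_{R_L}. -/
open CategoryTheory Bicategory

universe w v u

variable {𝒞 : Type u} [Bicategory.{w, v} 𝒞]

section Aux

lemma precomp_bij_s4 {C : Type*} [Category C] {u v w : C} (e : u ≅ v) :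
    Function.Bijective (fun f : v ⟶ w => e.hom ≫ f) :=
  ⟨fun s t hst => by simpa using congrArg (fun ρ => e.inv ≫ ρ) hst,
    fun g => ⟨e.inv ≫ g, by simp⟩⟩

lemma postcomp_bij_s4 {C : Type*} [Category C] {u v w : C} (e : u ≅ v) :
    Function.Bijective (fun f : w ⟶ u => f ≫ e.hom) :=
  ⟨fun s t hst => by simpa using congrArg (fun ρ => ρ ≫ e.inv) hst,
    fun g => ⟨g ≫ e.inv, by simp⟩⟩

variable {a b c x : 𝒞}

lemma exhibits_of_eq {L : a ⟶ b} {I : a ⟶ c} {R : b ⟶ c} {η η' : I ⟶ L ≫ R}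
    (h : ExhibitsLeftExt L I R η) (hη : η = η') : ExhibitsLeftExt L I R η' := hη ▸ h

/-- Transport of an exhibiting left extension along isomorphisms. -/
lemma exhibits_ofIso {L : a ⟶ b} {I I' : a ⟶ c} {R R' : b ⟶ c} {η : I ⟶ L ≫ R}
    (h : ExhibitsLeftExt L I R η) (i : I' ≅ I) (j : R ≅ R') (η' : I' ⟶ L ≫ R')
    (hη : i.hom ≫ η ≫ L ◁ j.hom = η') : ExhibitsLeftExt L I' R' η' := by
  subst hη
  intro M
  have heq : (fun σ : R' ⟶ M => (i.hom ≫ η ≫ L ◁ j.hom) ≫ L ◁ σ) =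
      (fun τ : I ⟶ L ≫ M => i.hom ≫ τ) ∘ ((fun δ : R ⟶ M => η ≫ L ◁ δ) ∘
        (fun σ : R' ⟶ M => j.hom ≫ σ)) := by
    funext σ
    simp [Bicategory.whiskerLeft_comp]
  rw [heq]
  exact (precomp_bij_s4 i).comp ((h M).comp (precomp_bij_s4 j))

/-- Pasting of exhibiting left extensions. -/
lemma exhibits_paste {L1 : a ⟶ b} {L2 : b ⟶ c} {I : a ⟶ x} {R : b ⟶ x} {S : c ⟶ x}
    {η1 : I ⟶ L1 ≫ R} {η2 : R ⟶ L2 ≫ S}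
    (h1 : ExhibitsLeftExt L1 I R η1) (h2 : ExhibitsLeftExt L2 R S η2) :
    ExhibitsLeftExt (L1 ≫ L2) I S (η1 ≫ L1 ◁ η2 ≫ (α_ L1 L2 S).inv) := by
  intro M
  have heq : (fun σ : S ⟶ M => (η1 ≫ L1 ◁ η2 ≫ (α_ L1 L2 S).inv) ≫ (L1 ≫ L2) ◁ σ) =
      (fun τ : I ⟶ L1 ≫ L2 ≫ M => τ ≫ (α_ L1 L2 M).inv) ∘
        ((fun δ : R ⟶ L2 ≫ M => η1 ≫ L1 ◁ δ) ∘ (fun σ : S ⟶ M => η2 ≫ L2 ◁ σ)) := by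
    funext σ
    simp [Bicategory.comp_whiskerLeft, Bicategory.whiskerLeft_comp]
  rw [heq]
  exact (postcomp_bij_s4 (α_ L1 L2 M).symm).comp ((h1 (L2 ≫ M)).comp (h2 M))

/-- Uniqueness of exhibited left extensions. -/
lemma exhibits_uniq {L : a ⟶ b} {I : a ⟶ c} {R R' : b ⟶ c}
    {η : I ⟶ L ≫ R} {η' : I ⟶ L ≫ R'}
    (h : ExhibitsLeftExt L I R η) (h' : ExhibitsLeftExt L I R' η') :
    ∃ e : R ≅ R', η ≫ L ◁ e.hom = η' := by
  obtain ⟨σ, hσ⟩ := (h R').2 η'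
  obtain ⟨τ, hτ⟩ := (h' R).2 η
  dsimp only at hσ hτ
  refine ⟨⟨σ, τ, ?_, ?_⟩, hσ⟩
  · apply (h R).1
    dsimp only
    rw [Bicategory.whiskerLeft_comp, ← Category.assoc, hσ, hτ]
    simp
  · apply (h' R').1
    dsimp only
    rw [Bicategory.whiskerLeft_comp, ← Category.assoc, hτ, hσ]
    simp

end Aux

/-- If `L` is `P`-admissible then `y B ∘ L` is `P`-admissible, with left
extension of `y A` along `y B ∘ L` given by `res_L = D.ext R_L`, exhibited by the
pasting of `φ_L` with `c_{R_L}`. -/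
theorem stmt4 (D : KZDoctrine 𝒞) {A B : 𝒞} (L : A ⟶ B)
    (RL : B ⟶ D.P A) (φL : D.y A ⟶ L ≫ RL) (hL : AdmissibleData D L RL φL) :
    AdmissibleData D (L ≫ D.y B) (D.ext RL)
      (φL ≫ (L ◁ (D.c RL).hom) ≫ (α_ L (D.y B) (D.ext RL)).inv) := by
  constructor
  · exact exhibits_paste hL.1 (D.ext_isLeftExt RL)
  · intro X hX H Hb cH hH
    have h1 : ExhibitsLeftExt L (D.y A ≫ Hb) (RL ≫ Hb)
        ((φL ▷ Hb) ≫ (α_ L RL Hb).hom) := hL.2 hX H Hb cH hH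
    obtain ⟨Gb, cG, hG, hGresp⟩ := hX H
    obtain ⟨e, he⟩ := exhibits_uniq hH hG
    have h2G : ExhibitsLeftExt (D.y B) (RL ≫ Gb) (D.ext RL ≫ Gb)
        (((D.c RL).hom ▷ Gb) ≫ (α_ (D.y B) (D.ext RL) Gb).hom) := hGresp RL
    have hcell : (whiskerLeftIso RL e).hom ≫
        ((((D.c RL).hom ▷ Gb) ≫ (α_ (D.y B) (D.ext RL) Gb).hom)) ≫
          D.y B ◁ (whiskerLeftIso (D.ext RL) e).symm.hom =
        (((D.c RL).hom ▷ Hb) ≫ (α_ (D.y B) (D.ext RL) Hb).hom) := by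
      dsimp
      rw [whiskerLeftIso_hom, whiskerLeftIso_inv]
      rw [Category.assoc, whisker_exchange_assoc]
      simp [← Bicategory.whiskerLeft_comp]
    have h2 : ExhibitsLeftExt (D.y B) (RL ≫ Hb) (D.ext RL ≫ Hb)
        (((D.c RL).hom ▷ Hb) ≫ (α_ (D.y B) (D.ext RL) Hb).hom) :=
      exhibits_ofIso h2G (whiskerLeftIso RL e) (whiskerLeftIso (D.ext RL) e).symm _ hcell
    unfold RespectsLeftExt
    refine exhibits_of_eq (exhibits_paste h1 h2) ?_
    bicategory
end

section
/- Let (P, y) be a KZ doctrine on a 2-category 𝒞 and L : A ⟶ B a 1-cell. Then L is P-admissible if and only if the 1-cell PL := lan_L, the left extension of y_B·L along y_A, has a right adjoint. -/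
open CategoryTheory Bicategory

universe w v u

variable {𝒞 : Type u} [Bicategory.{w, v} 𝒞]

/-! ### Auxiliary API for left extensions -/

section Aux

theorem bij_precomp {a b : 𝒞} {X Y : a ⟶ b} {Z : a ⟶ b} (i : X ≅ Y) :
    Function.Bijective (fun τ : Y ⟶ Z => i.hom ≫ τ) :=
  ⟨fun τ₁ τ₂ h => by simpa using congrArg (fun x => i.inv ≫ x) h,
   fun τ => ⟨i.inv ≫ τ, by simp⟩⟩

namespace ExhibitsLeftExt

variable {a b c : 𝒞} {L : a ⟶ b} {I : a ⟶ c} {R : b ⟶ c} {η : I ⟶ L ≫ R}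

/-- Descend a 2-cell through a left extension. -/
noncomputable def desc (h : ExhibitsLeftExt L I R η) {M : b ⟶ c} (τ : I ⟶ L ≫ M) : R ⟶ M :=
  ((h M).2 τ).choose

theorem fac (h : ExhibitsLeftExt L I R η) {M : b ⟶ c} (τ : I ⟶ L ≫ M) :
    η ≫ L ◁ h.desc τ = τ :=
  ((h M).2 τ).choose_spec

theorem hom_ext (h : ExhibitsLeftExt L I R η) {M : b ⟶ c} {σ σ' : R ⟶ M}
    (w : η ≫ L ◁ σ = η ≫ L ◁ σ') : σ = σ' :=
  (h M).1 w

/-- Transport a left extension along isomorphisms. -/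
theorem ofIso {I' : a ⟶ c} {R' : b ⟶ c} (h : ExhibitsLeftExt L I R η)
    (i : I' ≅ I) (r : R ≅ R') {η' : I' ⟶ L ≫ R'}
    (w : η' = i.hom ≫ η ≫ L ◁ r.hom) : ExhibitsLeftExt L I' R' η' := by
  intro M
  have hfun : (fun σ : R' ⟶ M => η' ≫ L ◁ σ)
      = (fun τ : I ⟶ L ≫ M => i.hom ≫ τ) ∘ (fun σ : R ⟶ M => η ≫ L ◁ σ)
        ∘ (fun σ : R' ⟶ M => r.hom ≫ σ) := by
    funext σ
    simp [w, Bicategory.whiskerLeft_comp]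
  rw [hfun]
  exact (bij_precomp i).comp ((h M).comp (bij_precomp r))

end ExhibitsLeftExt

end Aux

namespace KZDoctrine

variable (D : KZDoctrine 𝒞)

/-- Every object of the form `P C` is `P`-cocomplete. -/
theorem pcocomplete_P (C : 𝒞) : PCocomplete D (D.P C) :=
  fun G => ⟨D.ext G, D.c G, D.ext_isLeftExt G, fun {_} F => D.ext_respects F G⟩

/-- Forward direction: an admissible 1-cell induces a right adjoint to `lan L`. -/
theorem adj_of_admissible {A B : 𝒞} (L : A ⟶ B) (h : PAdmissible D L) :
    ∃ res : D.P B ⟶ D.P A, Nonempty (Bicategory.Adjunction (D.lan L) res) := by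
  obtain ⟨R, φ, hext, hresp⟩ := h
  have hφlan : ExhibitsLeftExt L (D.y A ≫ D.lan L) (R ≫ D.lan L)
      ((φ ▷ D.lan L) ≫ (α_ L R (D.lan L)).hom) :=
    hresp (D.pcocomplete_P B) (L ≫ D.y B) (D.lan L) (D.c (L ≫ D.y B))
      (D.ext_isLeftExt (L ≫ D.y B))
  -- the unit
  obtain ⟨u, hu⟩ := ((D.y_selfExt A) (D.lan L ≫ D.ext R)).2
    (φ ≫ L ◁ (D.c R).hom ≫ (α_ L (D.y B) (D.ext R)).inv ≫ (D.c (L ≫ D.y B)).hom ▷ D.ext R ≫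
      (α_ (D.y A) (D.lan L) (D.ext R)).hom)
  replace hu : (ρ_ (D.y A)).inv ≫ D.y A ◁ u =
      φ ≫ L ◁ (D.c R).hom ≫ (α_ L (D.y B) (D.ext R)).inv ≫ (D.c (L ≫ D.y B)).hom ▷ D.ext R ≫
        (α_ (D.y A) (D.lan L) (D.ext R)).hom := hu
  have hu' : D.y A ◁ u = (ρ_ (D.y A)).hom ≫
      (φ ≫ L ◁ (D.c R).hom ≫ (α_ L (D.y B) (D.ext R)).inv ≫ (D.c (L ≫ D.y B)).hom ▷ D.ext R ≫
        (α_ (D.y A) (D.lan L) (D.ext R)).hom) := by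
    rw [← hu]; simp
  -- the counit, in two steps
  obtain ⟨ε₀, hε₀⟩ := (hφlan (D.y B)).2 (D.c (L ≫ D.y B)).inv
  replace hε₀ : ((φ ▷ D.lan L) ≫ (α_ L R (D.lan L)).hom) ≫ L ◁ ε₀ =
      (D.c (L ≫ D.y B)).inv := hε₀
  obtain ⟨e', he'⟩ := ((D.ext_respects R (L ≫ D.y B)) (𝟙 (D.P B))).2 (ε₀ ≫ (ρ_ (D.y B)).inv)
  replace he' : (((D.c R).hom ▷ D.lan L) ≫ (α_ (D.y B) (D.ext R) (D.lan L)).hom) ≫ D.y B ◁ e' =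
      ε₀ ≫ (ρ_ (D.y B)).inv := he'
  refine ⟨D.ext R, ⟨{ unit := u, counit := e', left_triangle := ?_, right_triangle := ?_ }⟩⟩
  · -- left triangle
    have key : (λ_ (D.lan L)).inv ≫ leftZigzag u e' ≫ (ρ_ (D.lan L)).hom = 𝟙 (D.lan L) := by
      apply (D.ext_isLeftExt (L ≫ D.y B)).hom_ext
      calc (D.c (L ≫ D.y B)).hom ≫
            D.y A ◁ ((λ_ (D.lan L)).inv ≫ leftZigzag u e' ≫ (ρ_ (D.lan L)).hom)
          = (D.c (L ≫ D.y B)).hom ⊗≫ (D.y A ◁ u) ▷ D.lan L ⊗≫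
              (D.y A ≫ D.lan L) ◁ e' ⊗≫ 𝟙 _ := by
            dsimp only [leftZigzag]; bicategory
        _ = (D.c (L ≫ D.y B)).hom ⊗≫ φ ▷ D.lan L ⊗≫ (L ◁ (D.c R).hom) ▷ D.lan L ⊗≫
              ((D.c (L ≫ D.y B)).hom ▷ (D.ext R ≫ D.lan L) ≫ (D.y A ≫ D.lan L) ◁ e') ⊗≫
              𝟙 _ := by
            rw [hu']; bicategory
        _ = (D.c (L ≫ D.y B)).hom ⊗≫ φ ▷ D.lan L ⊗≫ (L ◁ (D.c R).hom) ▷ D.lan L ⊗≫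
              ((L ≫ D.y B) ◁ e' ≫ (D.c (L ≫ D.y B)).hom ▷ 𝟙 (D.P B)) ⊗≫ 𝟙 _ := by
            rw [← whisker_exchange]
        _ = (D.c (L ≫ D.y B)).hom ⊗≫ φ ▷ D.lan L ⊗≫
              L ◁ ((((D.c R).hom ▷ D.lan L) ≫ (α_ (D.y B) (D.ext R) (D.lan L)).hom) ≫
                D.y B ◁ e') ⊗≫ (D.c (L ≫ D.y B)).hom ▷ 𝟙 (D.P B) ⊗≫ 𝟙 _ := by
            bicategory
        _ = (D.c (L ≫ D.y B)).hom ⊗≫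
              (((φ ▷ D.lan L) ≫ (α_ L R (D.lan L)).hom) ≫ L ◁ ε₀) ⊗≫
              (D.c (L ≫ D.y B)).hom ▷ 𝟙 (D.P B) ⊗≫ 𝟙 _ := by
            rw [he']; bicategory
        _ = ((D.c (L ≫ D.y B)).hom ≫ (D.c (L ≫ D.y B)).inv) ⊗≫
              (D.c (L ≫ D.y B)).hom ▷ 𝟙 (D.P B) ⊗≫ 𝟙 _ := by
            rw [hε₀]; bicategory
        _ = (D.c (L ≫ D.y B)).hom ≫ D.y A ◁ 𝟙 (D.lan L) := by
            rw [Iso.hom_inv_id]; bicategory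
    calc leftZigzag u e'
        = (λ_ _).hom ≫ ((λ_ _).inv ≫ leftZigzag u e' ≫ (ρ_ _).hom) ≫ (ρ_ _).inv := by simp
      _ = (λ_ _).hom ≫ (ρ_ _).inv := by rw [key]; simp
  · -- right triangle
    have key : (ρ_ (D.ext R)).inv ≫ rightZigzag u e' ≫ (λ_ (D.ext R)).hom = 𝟙 (D.ext R) := by
      apply (D.ext_isLeftExt R).hom_ext
      apply hext.hom_ext
      calc φ ≫ L ◁ ((D.c R).hom ≫
            D.y B ◁ ((ρ_ (D.ext R)).inv ≫ rightZigzag u e' ≫ (λ_ (D.ext R)).hom))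
          = φ ⊗≫ L ◁ ((D.c R).hom ▷ 𝟙 (D.P A) ≫ (D.y B ≫ D.ext R) ◁ u) ⊗≫
              L ◁ (D.y B ◁ (e' ▷ D.ext R)) ⊗≫ 𝟙 _ := by
            dsimp only [rightZigzag]; bicategory
        _ = φ ⊗≫ L ◁ (R ◁ u ≫ (D.c R).hom ▷ (D.lan L ≫ D.ext R)) ⊗≫
              L ◁ (D.y B ◁ (e' ▷ D.ext R)) ⊗≫ 𝟙 _ := by
            rw [whisker_exchange]
        _ = 𝟙 _ ⊗≫ (φ ▷ 𝟙 (D.P A) ≫ (L ≫ R) ◁ u) ⊗≫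
              L ◁ ((((D.c R).hom ▷ D.lan L) ≫ (α_ (D.y B) (D.ext R) (D.lan L)).hom ≫
                D.y B ◁ e') ▷ D.ext R) ⊗≫ 𝟙 _ := by
            bicategory
        _ = 𝟙 _ ⊗≫ (D.y A ◁ u ≫ φ ▷ (D.lan L ≫ D.ext R)) ⊗≫
              L ◁ ((((D.c R).hom ▷ D.lan L) ≫ (α_ (D.y B) (D.ext R) (D.lan L)).hom ≫
                D.y B ◁ e') ▷ D.ext R) ⊗≫ 𝟙 _ := by
            rw [whisker_exchange]
        _ = 𝟙 _ ⊗≫ (D.y A ◁ u ≫ φ ▷ (D.lan L ≫ D.ext R)) ⊗≫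
              L ◁ (((((D.c R).hom ▷ D.lan L) ≫ (α_ (D.y B) (D.ext R) (D.lan L)).hom) ≫
                D.y B ◁ e') ▷ D.ext R) ⊗≫ 𝟙 _ := by
            bicategory
        _ = 𝟙 _ ⊗≫ (D.y A ◁ u ≫ φ ▷ (D.lan L ≫ D.ext R)) ⊗≫
              L ◁ ((ε₀ ≫ (ρ_ (D.y B)).inv) ▷ D.ext R) ⊗≫ 𝟙 _ := by
            rw [he']
        _ = 𝟙 _ ⊗≫ φ ⊗≫ L ◁ (D.c R).hom ⊗≫ (D.c (L ≫ D.y B)).hom ▷ D.ext R ⊗≫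
              ((((φ ▷ D.lan L) ≫ (α_ L R (D.lan L)).hom) ≫ L ◁ ε₀) ▷ D.ext R) ⊗≫ 𝟙 _ := by
            rw [hu']; bicategory
        _ = 𝟙 _ ⊗≫ φ ⊗≫ L ◁ (D.c R).hom ⊗≫
              (((D.c (L ≫ D.y B)).hom ≫ (D.c (L ≫ D.y B)).inv) ▷ D.ext R) ⊗≫ 𝟙 _ := by
            rw [hε₀]; bicategory
        _ = φ ≫ L ◁ ((D.c R).hom ≫ D.y B ◁ 𝟙 (D.ext R)) := by
            rw [Iso.hom_inv_id]; bicategory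
    calc rightZigzag u e'
        = (ρ_ _).hom ≫ ((ρ_ _).inv ≫ rightZigzag u e' ≫ (λ_ _).hom) ≫ (λ_ _).inv := by simp
      _ = (ρ_ _).hom ≫ (λ_ _).inv := by rw [key]; simp

/-- Backward direction: a right adjoint to `lan L` makes `L` admissible. -/
theorem admissible_of_adj {A B : 𝒞} (L : A ⟶ B) (res : D.P B ⟶ D.P A)
    (adj : Bicategory.Adjunction (D.lan L) res) : PAdmissible D L := by
  -- triangle identities in explicit form
  have lt : adj.unit ▷ D.lan L ⊗≫ D.lan L ◁ adj.counit
      = (λ_ (D.lan L)).hom ≫ (ρ_ (D.lan L)).inv := adj.left_triangle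
  have rt : res ◁ adj.unit ⊗≫ adj.counit ▷ res = (ρ_ res).hom ≫ (λ_ res).inv :=
    adj.right_triangle
  -- the comparison 2-cell θ : ext (y B ≫ res) ⟶ res
  obtain ⟨θ, hθfac⟩ := ((D.ext_isLeftExt (D.y B ≫ res)) res).2 (𝟙 (D.y B ≫ res))
  replace hθfac : (D.c (D.y B ≫ res)).hom ≫ D.y B ◁ θ = 𝟙 (D.y B ≫ res) := hθfac
  have hθ : D.y B ◁ θ = (D.c (D.y B ≫ res)).inv := by
    have h2 := congrArg (fun x => (D.c (D.y B ≫ res)).inv ≫ x) hθfac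
    simpa using h2
  -- the candidate 2-cell φ
  set φ : D.y A ⟶ L ≫ (D.y B ≫ res) :=
    (ρ_ (D.y A)).inv ≫ D.y A ◁ adj.unit ≫ (α_ (D.y A) (D.lan L) res).inv ≫
      (D.c (L ≫ D.y B)).inv ▷ res ≫ (α_ L (D.y B) res).hom with hφdef
  -- the 2-cell v : 𝟙 ⟶ lan L ≫ ext (y B ≫ res)
  obtain ⟨v, hv⟩ := ((D.y_selfExt A) (D.lan L ≫ D.ext (D.y B ≫ res))).2
    (φ ≫ L ◁ (D.c (D.y B ≫ res)).hom ≫ (α_ L (D.y B) (D.ext (D.y B ≫ res))).inv ≫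
      (D.c (L ≫ D.y B)).hom ▷ D.ext (D.y B ≫ res) ≫
      (α_ (D.y A) (D.lan L) (D.ext (D.y B ≫ res))).hom)
  replace hv : (ρ_ (D.y A)).inv ≫ D.y A ◁ v =
      φ ≫ L ◁ (D.c (D.y B ≫ res)).hom ≫ (α_ L (D.y B) (D.ext (D.y B ≫ res))).inv ≫
        (D.c (L ≫ D.y B)).hom ▷ D.ext (D.y B ≫ res) ≫
        (α_ (D.y A) (D.lan L) (D.ext (D.y B ≫ res))).hom := hv
  have hv' : D.y A ◁ v = (ρ_ (D.y A)).hom ≫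
      (φ ≫ L ◁ (D.c (D.y B ≫ res)).hom ≫ (α_ L (D.y B) (D.ext (D.y B ≫ res))).inv ≫
        (D.c (L ≫ D.y B)).hom ▷ D.ext (D.y B ≫ res) ≫
        (α_ (D.y A) (D.lan L) (D.ext (D.y B ≫ res))).hom) := by
    rw [← hv]; simp
  -- the inverse comparison θ'
  set θ' : res ⟶ D.ext (D.y B ≫ res) :=
    (ρ_ res).inv ≫ res ◁ v ≫ (α_ res (D.lan L) (D.ext (D.y B ≫ res))).inv ≫
      adj.counit ▷ D.ext (D.y B ≫ res) ≫ (λ_ (D.ext (D.y B ≫ res))).hom with hθ'def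
  have hva : v ≫ D.lan L ◁ θ = adj.unit := by
    apply (D.y_selfExt A).hom_ext
    calc (ρ_ (D.y A)).inv ≫ D.y A ◁ (v ≫ D.lan L ◁ θ)
        = ((ρ_ (D.y A)).inv ≫ D.y A ◁ v) ≫ D.y A ◁ (D.lan L ◁ θ) := by
          simp only [Bicategory.whiskerLeft_comp, Category.assoc]
      _ = 𝟙 _ ⊗≫ D.y A ◁ adj.unit ⊗≫ (D.c (L ≫ D.y B)).inv ▷ res ⊗≫
            L ◁ (D.c (D.y B ≫ res)).hom ⊗≫
            ((D.c (L ≫ D.y B)).hom ▷ D.ext (D.y B ≫ res) ≫ (D.y A ≫ D.lan L) ◁ θ) ⊗≫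
            𝟙 _ := by
          rw [hv, hφdef]; bicategory
      _ = 𝟙 _ ⊗≫ D.y A ◁ adj.unit ⊗≫ (D.c (L ≫ D.y B)).inv ▷ res ⊗≫
            L ◁ (D.c (D.y B ≫ res)).hom ⊗≫
            ((L ≫ D.y B) ◁ θ ≫ (D.c (L ≫ D.y B)).hom ▷ res) ⊗≫ 𝟙 _ := by
          rw [← whisker_exchange]
      _ = 𝟙 _ ⊗≫ D.y A ◁ adj.unit ⊗≫ (D.c (L ≫ D.y B)).inv ▷ res ⊗≫
            L ◁ ((D.c (D.y B ≫ res)).hom ≫ D.y B ◁ θ) ⊗≫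
            (D.c (L ≫ D.y B)).hom ▷ res ⊗≫ 𝟙 _ := by
          bicategory
      _ = 𝟙 _ ⊗≫ D.y A ◁ adj.unit ⊗≫
            ((D.c (L ≫ D.y B)).inv ≫ (D.c (L ≫ D.y B)).hom) ▷ res ⊗≫ 𝟙 _ := by
          rw [hθfac]; bicategory
      _ = (ρ_ (D.y A)).inv ≫ D.y A ◁ adj.unit := by
          rw [Iso.inv_hom_id]; bicategory
  have hθ'θ : θ' ≫ θ = 𝟙 res := by
    calc θ' ≫ θ
        = 𝟙 _ ⊗≫ res ◁ v ⊗≫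
            (adj.counit ▷ D.ext (D.y B ≫ res) ≫ 𝟙 (D.P B) ◁ θ) ⊗≫ 𝟙 _ := by
          rw [hθ'def]; bicategory
      _ = 𝟙 _ ⊗≫ res ◁ v ⊗≫
            ((res ≫ D.lan L) ◁ θ ≫ adj.counit ▷ res) ⊗≫ 𝟙 _ := by
          rw [← whisker_exchange]
      _ = 𝟙 _ ⊗≫ res ◁ (v ≫ D.lan L ◁ θ) ⊗≫ adj.counit ▷ res ⊗≫ 𝟙 _ := by
          bicategory
      _ = 𝟙 _ ⊗≫ (res ◁ adj.unit ⊗≫ adj.counit ▷ res) ⊗≫ 𝟙 _ := by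
          rw [hva]; bicategory
      _ = 𝟙 res := by rw [rt]; bicategory
  have hθ'w : D.y B ◁ θ' = (D.c (D.y B ≫ res)).hom := by
    have h1 : D.y B ◁ θ' ≫ (D.c (D.y B ≫ res)).inv = 𝟙 (D.y B ≫ res) := by
      rw [← hθ, ← Bicategory.whiskerLeft_comp, hθ'θ, Bicategory.whiskerLeft_id]
    have h2 := congrArg (fun x => x ≫ (D.c (D.y B ≫ res)).hom) h1
    simpa using h2
  -- the main bijection
  have MAIN : ∀ {X : 𝒞}, PCocomplete D X → ∀ (H : A ⟶ X) (Hb : D.P A ⟶ X)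
      (cH : H ≅ D.y A ≫ Hb), ExhibitsLeftExt (D.y A) H Hb cH.hom →
      RespectsLeftExt L (D.y A) (D.y B ≫ res) φ Hb := by
    intro X hX H Hb cH hHb
    obtain ⟨Hb₀, cH₀, hHb₀, hresp₀⟩ := hX H
    -- the canonical iso between Hb₀ and Hb
    have hj1 : cH₀.hom ≫ D.y A ◁ hHb₀.desc cH.hom = cH.hom := hHb₀.fac cH.hom
    have hj2 : cH.hom ≫ D.y A ◁ hHb.desc cH₀.hom = cH₀.hom := hHb.fac cH₀.hom
    have hjj : hHb₀.desc cH.hom ≫ hHb.desc cH₀.hom = 𝟙 Hb₀ := by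
      apply hHb₀.hom_ext
      rw [Bicategory.whiskerLeft_comp, ← Category.assoc, hj1, hj2]; simp
    have hjj' : hHb.desc cH₀.hom ≫ hHb₀.desc cH.hom = 𝟙 Hb := by
      apply hHb.hom_ext
      rw [Bicategory.whiskerLeft_comp, ← Category.assoc, hj2, hj1]; simp
    set j : Hb₀ ≅ Hb := ⟨hHb₀.desc cH.hom, hHb.desc cH₀.hom, hjj, hjj'⟩ with hjdef
    -- Hb respects the chosen extension of y B ≫ res
    have hR : ExhibitsLeftExt (D.y B) ((D.y B ≫ res) ≫ Hb) (D.ext (D.y B ≫ res) ≫ Hb)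
        (((D.c (D.y B ≫ res)).hom ▷ Hb) ≫ (α_ (D.y B) (D.ext (D.y B ≫ res)) Hb).hom) := by
      have h0 := hresp₀ (D.y B ≫ res)
      have w : ((D.c (D.y B ≫ res)).hom ▷ Hb) ≫ (α_ (D.y B) (D.ext (D.y B ≫ res)) Hb).hom
          = (D.y B ≫ res) ◁ j.inv ≫
            (((D.c (D.y B ≫ res)).hom ▷ Hb₀) ≫ (α_ (D.y B) (D.ext (D.y B ≫ res)) Hb₀).hom) ≫
            D.y B ◁ (D.ext (D.y B ≫ res) ◁ j.hom) := by
        symm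
        calc (D.y B ≫ res) ◁ j.inv ≫
              (((D.c (D.y B ≫ res)).hom ▷ Hb₀) ≫
                (α_ (D.y B) (D.ext (D.y B ≫ res)) Hb₀).hom) ≫
              D.y B ◁ (D.ext (D.y B ≫ res) ◁ j.hom)
            = ((D.y B ≫ res) ◁ j.inv ≫ (D.c (D.y B ≫ res)).hom ▷ Hb₀) ⊗≫
                D.y B ◁ (D.ext (D.y B ≫ res) ◁ j.hom) := by bicategory
          _ = ((D.c (D.y B ≫ res)).hom ▷ Hb ≫ (D.y B ≫ D.ext (D.y B ≫ res)) ◁ j.inv) ⊗≫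
                D.y B ◁ (D.ext (D.y B ≫ res) ◁ j.hom) := by rw [whisker_exchange]
          _ = (D.c (D.y B ≫ res)).hom ▷ Hb ⊗≫
                D.y B ◁ (D.ext (D.y B ≫ res) ◁ (j.inv ≫ j.hom)) ⊗≫ 𝟙 _ := by bicategory
          _ = ((D.c (D.y B ≫ res)).hom ▷ Hb) ≫
                (α_ (D.y B) (D.ext (D.y B ≫ res)) Hb).hom := by
              rw [Iso.inv_hom_id]; bicategory
      exact h0.ofIso (whiskerLeftIso (D.y B ≫ res) j.symm)
        (whiskerLeftIso (D.ext (D.y B ≫ res)) j) w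
    intro N
    obtain ⟨Nb, cN, hNb, -⟩ := hX N
    refine Function.bijective_iff_has_inverse.mpr
      ⟨fun w => (α_ (D.y B) res Hb).hom ≫
          D.y B ◁ (res ◁ hHb.desc (cH.hom ≫ w ≫ L ◁ cN.hom ≫ (α_ L (D.y B) Nb).inv ≫
              (D.c (L ≫ D.y B)).hom ▷ Nb ≫ (α_ (D.y A) (D.lan L) Nb).hom) ≫
            (α_ res (D.lan L) Nb).inv ≫ adj.counit ▷ Nb ≫ (λ_ Nb).hom) ≫ cN.inv,
        ?_, ?_⟩
    · -- left inverse
      intro σ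
      dsimp only
      obtain ⟨χ, hχ⟩ := (hR Nb).2 (σ ≫ cN.hom)
      replace hχ : (((D.c (D.y B ≫ res)).hom ▷ Hb) ≫
          (α_ (D.y B) (D.ext (D.y B ≫ res)) Hb).hom) ≫ D.y B ◁ χ = σ ≫ cN.hom := hχ
      have hξ : hHb.desc (cH.hom ≫ (((φ ▷ Hb) ≫ (α_ L (D.y B ≫ res) Hb).hom) ≫ L ◁ σ) ≫
            L ◁ cN.hom ≫ (α_ L (D.y B) Nb).inv ≫ (D.c (L ≫ D.y B)).hom ▷ Nb ≫
            (α_ (D.y A) (D.lan L) Nb).hom)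
          = (λ_ Hb).inv ≫ v ▷ Hb ≫ (α_ (D.lan L) (D.ext (D.y B ≫ res)) Hb).hom ≫
            D.lan L ◁ χ := by
        apply hHb.hom_ext
        rw [hHb.fac]
        symm
        calc cH.hom ≫ D.y A ◁ ((λ_ Hb).inv ≫ v ▷ Hb ≫
              (α_ (D.lan L) (D.ext (D.y B ≫ res)) Hb).hom ≫ D.lan L ◁ χ)
            = cH.hom ⊗≫ (D.y A ◁ v) ▷ Hb ⊗≫ D.y A ◁ (D.lan L ◁ χ) ⊗≫ 𝟙 _ := by
              bicategory
          _ = cH.hom ⊗≫ φ ▷ Hb ⊗≫ L ◁ ((D.c (D.y B ≫ res)).hom ▷ Hb) ⊗≫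
              ((D.c (L ≫ D.y B)).hom ▷ (D.ext (D.y B ≫ res) ≫ Hb) ≫
                (D.y A ≫ D.lan L) ◁ χ) ⊗≫ 𝟙 _ := by
              rw [hv']; bicategory
          _ = cH.hom ⊗≫ φ ▷ Hb ⊗≫ L ◁ ((D.c (D.y B ≫ res)).hom ▷ Hb) ⊗≫
              ((L ≫ D.y B) ◁ χ ≫ (D.c (L ≫ D.y B)).hom ▷ Nb) ⊗≫ 𝟙 _ := by
              rw [← whisker_exchange]
          _ = cH.hom ⊗≫ φ ▷ Hb ⊗≫
              L ◁ ((((D.c (D.y B ≫ res)).hom ▷ Hb) ≫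
                (α_ (D.y B) (D.ext (D.y B ≫ res)) Hb).hom) ≫ D.y B ◁ χ) ⊗≫
              (D.c (L ≫ D.y B)).hom ▷ Nb ⊗≫ 𝟙 _ := by bicategory
          _ = cH.hom ⊗≫ φ ▷ Hb ⊗≫ L ◁ (σ ≫ cN.hom) ⊗≫
              (D.c (L ≫ D.y B)).hom ▷ Nb ⊗≫ 𝟙 _ := by rw [hχ]
          _ = cH.hom ≫ (((φ ▷ Hb) ≫ (α_ L (D.y B ≫ res) Hb).hom) ≫ L ◁ σ) ≫
              L ◁ cN.hom ≫ (α_ L (D.y B) Nb).inv ≫ (D.c (L ≫ D.y B)).hom ▷ Nb ≫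
              (α_ (D.y A) (D.lan L) Nb).hom := by bicategory
      rw [hξ]
      calc (α_ (D.y B) res Hb).hom ≫
            D.y B ◁ (res ◁ ((λ_ Hb).inv ≫ v ▷ Hb ≫
              (α_ (D.lan L) (D.ext (D.y B ≫ res)) Hb).hom ≫ D.lan L ◁ χ) ≫
              (α_ res (D.lan L) Nb).inv ≫ adj.counit ▷ Nb ≫ (λ_ Nb).hom) ≫ cN.inv
          = 𝟙 _ ⊗≫ D.y B ◁ (res ◁ (v ▷ Hb)) ⊗≫
            D.y B ◁ ((res ≫ D.lan L) ◁ χ ≫ adj.counit ▷ Nb) ⊗≫ cN.inv ⊗≫ 𝟙 _ := by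
            bicategory
        _ = 𝟙 _ ⊗≫ D.y B ◁ (res ◁ (v ▷ Hb)) ⊗≫
            D.y B ◁ (adj.counit ▷ (D.ext (D.y B ≫ res) ≫ Hb) ≫ 𝟙 (D.P B) ◁ χ) ⊗≫
            cN.inv ⊗≫ 𝟙 _ := by rw [whisker_exchange]
        _ = 𝟙 _ ⊗≫ (D.y B ◁ θ') ▷ Hb ⊗≫ D.y B ◁ χ ⊗≫ cN.inv ⊗≫ 𝟙 _ := by
            rw [hθ'def]; bicategory
        _ = 𝟙 _ ⊗≫ ((((D.c (D.y B ≫ res)).hom ▷ Hb) ≫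
              (α_ (D.y B) (D.ext (D.y B ≫ res)) Hb).hom) ≫ D.y B ◁ χ) ⊗≫
            cN.inv ⊗≫ 𝟙 _ := by rw [hθ'w]; bicategory
        _ = 𝟙 _ ⊗≫ (σ ≫ cN.hom) ⊗≫ cN.inv ⊗≫ 𝟙 _ := by rw [hχ]
        _ = σ ≫ cN.hom ≫ cN.inv := by bicategory
        _ = σ := by simp
    · -- right inverse
      intro w
      dsimp only
      have hD : D.y A ◁ hHb.desc (cH.hom ≫ w ≫ L ◁ cN.hom ≫ (α_ L (D.y B) Nb).inv ≫
            (D.c (L ≫ D.y B)).hom ▷ Nb ≫ (α_ (D.y A) (D.lan L) Nb).hom)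
          = cH.inv ≫ cH.hom ≫ w ≫ L ◁ cN.hom ≫ (α_ L (D.y B) Nb).inv ≫
            (D.c (L ≫ D.y B)).hom ▷ Nb ≫ (α_ (D.y A) (D.lan L) Nb).hom := by
        have h3 := hHb.fac (cH.hom ≫ w ≫ L ◁ cN.hom ≫ (α_ L (D.y B) Nb).inv ≫
          (D.c (L ≫ D.y B)).hom ▷ Nb ≫ (α_ (D.y A) (D.lan L) Nb).hom)
        have h4 := congrArg (fun x => cH.inv ≫ x) h3
        simpa using h4
      calc ((φ ▷ Hb) ≫ (α_ L (D.y B ≫ res) Hb).hom) ≫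
            L ◁ ((α_ (D.y B) res Hb).hom ≫
              D.y B ◁ (res ◁ hHb.desc (cH.hom ≫ w ≫ L ◁ cN.hom ≫ (α_ L (D.y B) Nb).inv ≫
                  (D.c (L ≫ D.y B)).hom ▷ Nb ≫ (α_ (D.y A) (D.lan L) Nb).hom) ≫
                (α_ res (D.lan L) Nb).inv ≫ adj.counit ▷ Nb ≫ (λ_ Nb).hom) ≫ cN.inv)
          = 𝟙 _ ⊗≫ (D.y A ◁ adj.unit) ▷ Hb ⊗≫
            ((D.c (L ≫ D.y B)).inv ▷ (res ≫ Hb) ≫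
              (L ≫ D.y B) ◁ (res ◁ hHb.desc (cH.hom ≫ w ≫ L ◁ cN.hom ≫
                  (α_ L (D.y B) Nb).inv ≫ (D.c (L ≫ D.y B)).hom ▷ Nb ≫
                  (α_ (D.y A) (D.lan L) Nb).hom) ≫
                (α_ res (D.lan L) Nb).inv ≫ adj.counit ▷ Nb ≫ (λ_ Nb).hom)) ⊗≫
            L ◁ cN.inv ⊗≫ 𝟙 _ := by
            rw [hφdef]; bicategory
        _ = 𝟙 _ ⊗≫ (D.y A ◁ adj.unit) ▷ Hb ⊗≫
            ((D.y A ≫ D.lan L) ◁ (res ◁ hHb.desc (cH.hom ≫ w ≫ L ◁ cN.hom ≫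
                  (α_ L (D.y B) Nb).inv ≫ (D.c (L ≫ D.y B)).hom ▷ Nb ≫
                  (α_ (D.y A) (D.lan L) Nb).hom) ≫
                (α_ res (D.lan L) Nb).inv ≫ adj.counit ▷ Nb ≫ (λ_ Nb).hom) ≫
              (D.c (L ≫ D.y B)).inv ▷ Nb) ⊗≫
            L ◁ cN.inv ⊗≫ 𝟙 _ := by rw [← whisker_exchange]
        _ = 𝟙 _ ⊗≫ D.y A ◁ (adj.unit ▷ Hb ≫
              (D.lan L ≫ res) ◁ hHb.desc (cH.hom ≫ w ≫ L ◁ cN.hom ≫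
                (α_ L (D.y B) Nb).inv ≫ (D.c (L ≫ D.y B)).hom ▷ Nb ≫
                (α_ (D.y A) (D.lan L) Nb).hom)) ⊗≫
            D.y A ◁ ((D.lan L ◁ adj.counit) ▷ Nb) ⊗≫
            (D.c (L ≫ D.y B)).inv ▷ Nb ⊗≫ L ◁ cN.inv ⊗≫ 𝟙 _ := by bicategory
        _ = 𝟙 _ ⊗≫ D.y A ◁ (𝟙 (D.P A) ◁ hHb.desc (cH.hom ≫ w ≫ L ◁ cN.hom ≫
                (α_ L (D.y B) Nb).inv ≫ (D.c (L ≫ D.y B)).hom ▷ Nb ≫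
                (α_ (D.y A) (D.lan L) Nb).hom) ≫
              adj.unit ▷ (D.lan L ≫ Nb)) ⊗≫
            D.y A ◁ ((D.lan L ◁ adj.counit) ▷ Nb) ⊗≫
            (D.c (L ≫ D.y B)).inv ▷ Nb ⊗≫ L ◁ cN.inv ⊗≫ 𝟙 _ := by
            rw [← whisker_exchange]
        _ = 𝟙 _ ⊗≫ D.y A ◁ hHb.desc (cH.hom ≫ w ≫ L ◁ cN.hom ≫
              (α_ L (D.y B) Nb).inv ≫ (D.c (L ≫ D.y B)).hom ▷ Nb ≫
              (α_ (D.y A) (D.lan L) Nb).hom) ⊗≫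
            D.y A ◁ ((adj.unit ▷ D.lan L ⊗≫ D.lan L ◁ adj.counit) ▷ Nb) ⊗≫
            (D.c (L ≫ D.y B)).inv ▷ Nb ⊗≫ L ◁ cN.inv ⊗≫ 𝟙 _ := by bicategory
        _ = 𝟙 _ ⊗≫ D.y A ◁ hHb.desc (cH.hom ≫ w ≫ L ◁ cN.hom ≫
              (α_ L (D.y B) Nb).inv ≫ (D.c (L ≫ D.y B)).hom ▷ Nb ≫
              (α_ (D.y A) (D.lan L) Nb).hom) ⊗≫
            (D.c (L ≫ D.y B)).inv ▷ Nb ⊗≫ L ◁ cN.inv ⊗≫ 𝟙 _ := by rw [lt]; bicategory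
        _ = 𝟙 _ ⊗≫ (cH.inv ≫ cH.hom) ⊗≫ w ⊗≫ L ◁ cN.hom ⊗≫
            (((D.c (L ≫ D.y B)).hom ≫ (D.c (L ≫ D.y B)).inv) ▷ Nb) ⊗≫
            L ◁ cN.inv ⊗≫ 𝟙 _ := by rw [hD]; bicategory
        _ = w ≫ L ◁ (cN.hom ≫ cN.inv) := by
            rw [Iso.inv_hom_id, Iso.hom_inv_id]; bicategory
        _ = w := by simp
  refine ⟨D.y B ≫ res, φ, ?_, fun {X} hX H Hb cH hHb => MAIN hX H Hb cH hHb⟩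
  have h1 := MAIN (D.pcocomplete_P A) (D.y A) (𝟙 (D.P A)) (ρ_ (D.y A)).symm (D.y_selfExt A)
  refine h1.ofIso (ρ_ (D.y A)).symm (ρ_ (D.y B ≫ res)) ?_
  simp only [Iso.symm_hom]
  bicategory

end KZDoctrine

/-- `L` is `P`-admissible iff `PL := lan L` has a right adjoint. -/
theorem stmt5 (D : KZDoctrine 𝒞) {A B : 𝒞} (L : A ⟶ B) :
    PAdmissible D L ↔
      ∃ res : D.P B ⟶ D.P A, Nonempty (Bicategory.Adjunction (D.lan L) res) := by
  constructor
  · exact fun h => D.adj_of_admissible L h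
  · rintro ⟨res, ⟨adj⟩⟩
    exact D.admissible_of_adj L res adj
end

section
/- Let (P, y) be a KZ doctrine on a 2-category 𝒞 and L : A ⟶ B a 1-cell. Then L is P-admissible if and only if every P-cocomplete object X admits, and every P-homomorphism between P-cocomplete objects respects, left extensions along L; that is: for every K : A ⟶ X with X P-cocomplete there exist J : B ⟶ X and a 2-cell δ : K ⟶ J·L exhibiting J as a left extension of K along L, and moreover this left extension is respected by every P-homomorphism E : X ⟶ Y into any P-cocomplete object Y. -/
open CategoryTheory Bicategory

universe w v u

variable {𝒞 : Type u} [Bicategory.{w, v} 𝒞]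

section Aux

variable {a b c d : 𝒞}

lemma exhibits_congr {L : a ⟶ b} {I : a ⟶ c} {R : b ⟶ c}
    {η η' : I ⟶ L ≫ R} (e : η = η') (h : ExhibitsLeftExt L I R η) :
    ExhibitsLeftExt L I R η' := e ▸ h

lemma exhibits_precomp_iso {L : a ⟶ b} {I I' : a ⟶ c} {R : b ⟶ c}
    {η : I ⟶ L ≫ R} (θ : I' ≅ I) (h : ExhibitsLeftExt L I R η) :
    ExhibitsLeftExt L I' R (θ.hom ≫ η) := by
  intro M
  have he : (fun σ : R ⟶ M => (θ.hom ≫ η) ≫ L ◁ σ)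
      = (fun τ : I ⟶ L ≫ M => θ.hom ≫ τ) ∘ (fun σ : R ⟶ M => η ≫ L ◁ σ) := by
    funext σ; simp
  rw [he]
  refine Function.Bijective.comp ?_ (h M)
  constructor
  · intro τ₁ τ₂ hτ
    simpa using congrArg (fun τ => θ.inv ≫ τ) hτ
  · intro τ; exact ⟨θ.inv ≫ τ, by simp⟩

lemma exhibits_whisker_iso {L : a ⟶ b} {I : a ⟶ c} {R R' : b ⟶ c}
    {η : I ⟶ L ≫ R} (ψ : R ≅ R') (h : ExhibitsLeftExt L I R η) :
    ExhibitsLeftExt L I R' (η ≫ L ◁ ψ.hom) := by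
  intro M
  have he : (fun σ : R' ⟶ M => (η ≫ L ◁ ψ.hom) ≫ L ◁ σ)
      = (fun τ : R ⟶ M => η ≫ L ◁ τ) ∘ (fun σ : R' ⟶ M => ψ.hom ≫ σ) := by
    funext σ; simp
  rw [he]
  refine Function.Bijective.comp (h M) ?_
  constructor
  · intro τ₁ τ₂ hτ
    simpa using congrArg (fun τ => ψ.inv ≫ τ) hτ
  · intro τ; exact ⟨ψ.inv ≫ τ, by simp⟩

lemma leftExt_unique {L : a ⟶ b} {I : a ⟶ c} {R R' : b ⟶ c}
    {η : I ⟶ L ≫ R} {η' : I ⟶ L ≫ R'}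
    (h : ExhibitsLeftExt L I R η) (h' : ExhibitsLeftExt L I R' η') :
    ∃ ψ : R ≅ R', η ≫ L ◁ ψ.hom = η' := by
  obtain ⟨σ, hσ⟩ := (h R').2 η'
  obtain ⟨σ', hσ'⟩ := (h' R).2 η
  dsimp only at hσ hσ'
  refine ⟨⟨σ, σ', ?_, ?_⟩, hσ⟩
  · apply (h R).1
    show η ≫ L ◁ (σ ≫ σ') = η ≫ L ◁ 𝟙 R
    rw [Bicategory.whiskerLeft_comp, ← Category.assoc, hσ, hσ',
      Bicategory.whiskerLeft_id, Category.comp_id]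
  · apply (h' R').1
    show η' ≫ L ◁ (σ' ≫ σ) = η' ≫ L ◁ 𝟙 R'
    rw [Bicategory.whiskerLeft_comp, ← Category.assoc, hσ', hσ,
      Bicategory.whiskerLeft_id, Category.comp_id]

lemma respects_whisker_iso {L : a ⟶ b} {I : a ⟶ c} {R R' : b ⟶ c}
    {η : I ⟶ L ≫ R} {E : c ⟶ d} (ψ : R ≅ R') (h : RespectsLeftExt L I R η E) :
    RespectsLeftExt L I R' (η ≫ L ◁ ψ.hom) E := by
  unfold RespectsLeftExt at *
  have heq : ((η ≫ L ◁ ψ.hom) ▷ E) ≫ (α_ L R' E).hom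
      = ((η ▷ E) ≫ (α_ L R E).hom) ≫ L ◁ (whiskerRightIso ψ E).hom := by
    simp [associator_naturality_middle]
  rw [heq]
  exact exhibits_whisker_iso _ h

lemma respects_iso_E {L : a ⟶ b} {I : a ⟶ c} {R : b ⟶ c}
    {η : I ⟶ L ≫ R} {E E' : c ⟶ d} (e : E ≅ E') (h : RespectsLeftExt L I R η E) :
    RespectsLeftExt L I R η E' := by
  unfold RespectsLeftExt at *
  have key := exhibits_whisker_iso (whiskerLeftIso R e)
    (exhibits_precomp_iso (whiskerLeftIso I e).symm h)
  refine exhibits_congr ?_ key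
  simp only [Iso.symm_hom, whiskerLeftIso_inv, whiskerLeftIso_hom, Category.assoc]
  rw [whisker_exchange_assoc]
  simp [associator_naturality_right_assoc, ← Bicategory.whiskerLeft_comp]

lemma phom_of_ext {A X : 𝒞} (D : KZDoctrine 𝒞) (hX : PCocomplete D X)
    (H : A ⟶ X) (Hb : D.P A ⟶ X) (cH : H ≅ D.y A ≫ Hb)
    (hH : ExhibitsLeftExt (D.y A) H Hb cH.hom) : PHomomorphism D Hb := by
  intro A' G Gb η hη
  obtain ⟨Hb', cH', hH', hresp'⟩ := hX H
  obtain ⟨ψ, hψ⟩ := leftExt_unique hH' hH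
  have hHbresp : ∀ {A'' : 𝒞} (F : A'' ⟶ D.P A),
      RespectsLeftExt (D.y A'') F (D.ext F) (D.c F).hom Hb :=
    fun F => respects_iso_E ψ (hresp' F)
  obtain ⟨χ, hχ⟩ := leftExt_unique (D.ext_isLeftExt G) hη
  have := respects_whisker_iso χ (hHbresp G)
  rwa [hχ] at this

end Aux

/-- `L` is `P`-admissible iff every `P`-cocomplete object admits, and every
`P`-homomorphism into a `P`-cocomplete object respects, left extensions along `L`. -/
theorem stmt6 (D : KZDoctrine 𝒞) {A B : 𝒞} (L : A ⟶ B) :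
    PAdmissible D L ↔
      ∀ (X : 𝒞), PCocomplete D X → ∀ K : A ⟶ X,
        ∃ (J : B ⟶ X) (δ : K ⟶ L ≫ J),
          ExhibitsLeftExt L K J δ ∧
          ∀ (Y : 𝒞), PCocomplete D Y → ∀ E : X ⟶ Y, PHomomorphism D E →
            RespectsLeftExt L K J δ E := by
  constructor
  · rintro ⟨R, φ, hexh, hadm⟩ X hX K
    obtain ⟨Kb, cK, hK, -⟩ := hX K
    have h1 : RespectsLeftExt L (D.y A) R φ Kb := hadm hX K Kb cK hK
    refine ⟨R ≫ Kb, cK.hom ≫ ((φ ▷ Kb) ≫ (α_ L R Kb).hom), ?_, ?_⟩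
    · exact exhibits_precomp_iso cK h1
    · intro Y hY E hE
      have hKE : ExhibitsLeftExt (D.y A) (K ≫ E) (Kb ≫ E)
          ((whiskerRightIso cK E ≪≫ α_ (D.y A) Kb E).hom) := by
        have := hE K Kb cK.hom hK
        unfold RespectsLeftExt at this
        simpa using this
      have h2 : RespectsLeftExt L (D.y A) R φ (Kb ≫ E) :=
        hadm hY (K ≫ E) (Kb ≫ E) (whiskerRightIso cK E ≪≫ α_ (D.y A) Kb E) hKE
      unfold RespectsLeftExt at h2 ⊢
      have h3 := exhibits_whisker_iso (α_ R Kb E).symm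
        (exhibits_precomp_iso (whiskerRightIso cK E ≪≫ α_ (D.y A) Kb E) h2)
      refine exhibits_congr ?_ h3
      simp only [Iso.trans_hom, whiskerRightIso_hom, Iso.symm_hom, comp_whiskerRight,
        Category.assoc]
      rw [← associator_naturality_left_assoc]
      congr 2
      rw [← pentagon_assoc]
      simp
  · intro h
    have hPA : PCocomplete D (D.P A) := fun {A'} G =>
      ⟨D.ext G, D.c G, D.ext_isLeftExt G, fun {A''} F => D.ext_respects F G⟩
    obtain ⟨R, φ, hexh, hresp⟩ := h (D.P A) hPA (D.y A)
    refine ⟨R, φ, hexh, ?_⟩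
    intro X hX H Hb cH hH
    exact hresp X hX Hb (phom_of_ext D hX H Hb cH hH)
end

section
/- Let (P, y) be a KZ doctrine on a 2-category 𝒞 and L : A ⟶ B a 1-cell such that PL := lan_L has a right adjoint res_L. Then the identity 2-cell exhibits res_L : PB ⟶ PA as a left extension of res_L·y_B along y_B; in particular res_L respects the left extension id_{PB} of y_B along y_B, and res_L is a P-homomorphism. -/
open CategoryTheory Bicategory

universe w v u

variable {𝒞 : Type u} [Bicategory.{w, v} 𝒞]

section Stmt7Aux

variable {𝒞 : Type u} [Bicategory.{w, v} 𝒞]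

/-- Pre-composition with a 2-cell admitting a two-sided inverse is bijective. -/
private lemma bij_precomp_s7 {a b : 𝒞} {f g h : a ⟶ b} (x : f ⟶ g) (x' : g ⟶ f)
    (hx : x ≫ x' = 𝟙 f) (hx' : x' ≫ x = 𝟙 g) :
    Function.Bijective (fun σ : g ⟶ h => x ≫ σ) := by
  constructor
  · intro s t hst
    replace hst : x ≫ s = x ≫ t := hst
    calc s = (x' ≫ x) ≫ s := by rw [hx', Category.id_comp]
    _ = x' ≫ x ≫ t := by rw [Category.assoc, hst]
    _ = t := by rw [← Category.assoc, hx', Category.id_comp]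
  · intro τ
    refine ⟨x' ≫ τ, ?_⟩
    show x ≫ x' ≫ τ = τ
    rw [← Category.assoc, hx, Category.id_comp]

end Stmt7Aux

/-- If `PL := lan L` has a right adjoint `res`, then the identity 2-cell
exhibits `res` as a left extension of `res ∘ y B` along `y B`; in particular `res`
respects the left extension `𝟙 (P B)` of `y B` along `y B`, and `res` is a
`P`-homomorphism. -/
theorem stmt7 (D : KZDoctrine 𝒞) {A B : 𝒞} (L : A ⟶ B)
    (res : D.P B ⟶ D.P A) (adj : Bicategory.Adjunction (D.lan L) res) :
    ExhibitsLeftExt (D.y B) (D.y B ≫ res) res (𝟙 (D.y B ≫ res)) ∧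
    RespectsLeftExt (D.y B) (D.y B) (𝟙 (D.P B)) (ρ_ (D.y B)).inv res ∧
    PHomomorphism D res := by
  replace adj : Bicategory.Adjunction (D.ext (L ≫ D.y B)) res := adj
  have rz : res ◁ adj.unit ≫ (α_ res (D.ext (L ≫ D.y B)) res).inv ≫ adj.counit ▷ res =
      (ρ_ res).hom ≫ (λ_ res).inv := by
    have := adj.right_triangle
    dsimp [rightZigzag, bicategoricalComp] at this
    simpa using this
  have bijE := D.ext_isLeftExt (D.y B ≫ res)
  have bijEF := D.ext_respects (D.y B ≫ res) (L ≫ D.y B)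
  -- the "counit" w : E ≫ F ⟶ 𝟙
  obtain ⟨w, hw⟩ := (bijEF (𝟙 (D.P B))).2
    ((α_ (D.y B) res (D.ext (L ≫ D.y B))).hom ≫ (D.y B ◁ adj.counit))
  replace hw : (((D.c (D.y B ≫ res)).hom ▷ D.ext (L ≫ D.y B)) ≫
      (α_ (D.y B) (D.ext (D.y B ≫ res)) (D.ext (L ≫ D.y B))).hom) ≫ (D.y B ◁ w) =
      (α_ (D.y B) res (D.ext (L ≫ D.y B))).hom ≫ (D.y B ◁ adj.counit) := hw
  -- the comparison e' : E ⟶ res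
  obtain ⟨e', he'⟩ : ∃ e'' : D.ext (D.y B ≫ res) ⟶ res, e'' =
      (ρ_ (D.ext (D.y B ≫ res))).inv ≫ (D.ext (D.y B ≫ res) ◁ adj.unit) ≫
      (α_ (D.ext (D.y B ≫ res)) (D.ext (L ≫ D.y B)) res).inv ≫ (w ▷ res) ≫ (λ_ res).hom :=
    ⟨_, rfl⟩
  have hclub : (D.c (D.y B ≫ res)).hom ≫ (D.y B ◁ e') = 𝟙 (D.y B ≫ res) := by
    rw [he']
    calc (D.c (D.y B ≫ res)).hom ≫ D.y B ◁ ((ρ_ (D.ext (D.y B ≫ res))).inv ≫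
          (D.ext (D.y B ≫ res) ◁ adj.unit) ≫
          (α_ (D.ext (D.y B ≫ res)) (D.ext (L ≫ D.y B)) res).inv ≫ (w ▷ res) ≫ (λ_ res).hom)
        = 𝟙 _ ⊗≫ ((D.c (D.y B ≫ res)).hom ▷ 𝟙 (D.P A) ≫
            (D.y B ≫ D.ext (D.y B ≫ res)) ◁ adj.unit) ⊗≫ ((D.y B ◁ w) ▷ res) ⊗≫ 𝟙 _ := by
          bicategory
      _ = 𝟙 _ ⊗≫ ((D.y B ≫ res) ◁ adj.unit ≫
            (D.c (D.y B ≫ res)).hom ▷ (D.ext (L ≫ D.y B) ≫ res)) ⊗≫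
            ((D.y B ◁ w) ▷ res) ⊗≫ 𝟙 _ := by
          rw [← whisker_exchange ((D.c (D.y B ≫ res)).hom) adj.unit]
      _ = 𝟙 _ ⊗≫ (D.y B ≫ res) ◁ adj.unit ⊗≫
            (((((D.c (D.y B ≫ res)).hom ▷ D.ext (L ≫ D.y B)) ≫
              (α_ (D.y B) (D.ext (D.y B ≫ res)) (D.ext (L ≫ D.y B))).hom) ≫
              (D.y B ◁ w)) ▷ res) ⊗≫ 𝟙 _ := by
          bicategory
      _ = 𝟙 _ ⊗≫ (D.y B ≫ res) ◁ adj.unit ⊗≫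
            (((α_ (D.y B) res (D.ext (L ≫ D.y B))).hom ≫ (D.y B ◁ adj.counit)) ▷ res) ⊗≫
            𝟙 _ := by
          rw [hw]
      _ = 𝟙 _ ⊗≫ D.y B ◁ (res ◁ adj.unit ≫
            (α_ res (D.ext (L ≫ D.y B)) res).inv ≫ adj.counit ▷ res) ⊗≫ 𝟙 _ := by
          bicategory
      _ = 𝟙 _ ⊗≫ D.y B ◁ ((ρ_ res).hom ≫ (λ_ res).inv) ⊗≫ 𝟙 _ := by
          rw [rz]
      _ = 𝟙 (D.y B ≫ res) := by bicategory
  -- the "unit" hh : 𝟙 ⟶ F ≫ E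
  obtain ⟨hh, hhh⟩ := (D.y_selfExt A (D.ext (L ≫ D.y B) ≫ D.ext (D.y B ≫ res))).2
    ((ρ_ (D.y A)).inv ≫ (D.y A ◁ adj.unit) ≫ (α_ (D.y A) (D.ext (L ≫ D.y B)) res).inv ≫
     ((D.c (L ≫ D.y B)).inv ▷ res) ≫ (α_ L (D.y B) res).hom ≫
     (L ◁ (D.c (D.y B ≫ res)).hom) ≫ (α_ L (D.y B) (D.ext (D.y B ≫ res))).inv ≫
     ((D.c (L ≫ D.y B)).hom ▷ D.ext (D.y B ≫ res)) ≫
     (α_ (D.y A) (D.ext (L ≫ D.y B)) (D.ext (D.y B ≫ res))).hom)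
  replace hhh : (ρ_ (D.y A)).inv ≫ (D.y A ◁ hh) =
      (ρ_ (D.y A)).inv ≫ (D.y A ◁ adj.unit) ≫ (α_ (D.y A) (D.ext (L ≫ D.y B)) res).inv ≫
      ((D.c (L ≫ D.y B)).inv ▷ res) ≫ (α_ L (D.y B) res).hom ≫
      (L ◁ (D.c (D.y B ≫ res)).hom) ≫ (α_ L (D.y B) (D.ext (D.y B ≫ res))).inv ≫
      ((D.c (L ≫ D.y B)).hom ▷ D.ext (D.y B ≫ res)) ≫
      (α_ (D.y A) (D.ext (L ≫ D.y B)) (D.ext (D.y B ≫ res))).hom := hhh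
  have hdiam : hh ≫ (D.ext (L ≫ D.y B) ◁ e') = adj.unit := by
    apply (D.y_selfExt A (D.ext (L ≫ D.y B) ≫ res)).injective
    show (ρ_ (D.y A)).inv ≫ D.y A ◁ (hh ≫ D.ext (L ≫ D.y B) ◁ e') =
      (ρ_ (D.y A)).inv ≫ D.y A ◁ adj.unit
    calc (ρ_ (D.y A)).inv ≫ D.y A ◁ (hh ≫ D.ext (L ≫ D.y B) ◁ e')
        = ((ρ_ (D.y A)).inv ≫ D.y A ◁ hh) ≫ D.y A ◁ (D.ext (L ≫ D.y B) ◁ e') := by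
          rw [Bicategory.whiskerLeft_comp, Category.assoc]
      _ = ((ρ_ (D.y A)).inv ≫ (D.y A ◁ adj.unit) ≫
            (α_ (D.y A) (D.ext (L ≫ D.y B)) res).inv ≫ ((D.c (L ≫ D.y B)).inv ▷ res) ≫
            (α_ L (D.y B) res).hom ≫ (L ◁ (D.c (D.y B ≫ res)).hom) ≫
            (α_ L (D.y B) (D.ext (D.y B ≫ res))).inv ≫
            ((D.c (L ≫ D.y B)).hom ▷ D.ext (D.y B ≫ res)) ≫
            (α_ (D.y A) (D.ext (L ≫ D.y B)) (D.ext (D.y B ≫ res))).hom) ≫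
            D.y A ◁ (D.ext (L ≫ D.y B) ◁ e') := by
          rw [hhh]
      _ = 𝟙 _ ⊗≫ D.y A ◁ adj.unit ⊗≫ (D.c (L ≫ D.y B)).inv ▷ res ⊗≫
            L ◁ (D.c (D.y B ≫ res)).hom ⊗≫
            ((D.c (L ≫ D.y B)).hom ▷ D.ext (D.y B ≫ res) ≫
              (D.y A ≫ D.ext (L ≫ D.y B)) ◁ e') ⊗≫ 𝟙 _ := by
          bicategory
      _ = 𝟙 _ ⊗≫ D.y A ◁ adj.unit ⊗≫ (D.c (L ≫ D.y B)).inv ▷ res ⊗≫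
            L ◁ (D.c (D.y B ≫ res)).hom ⊗≫
            ((L ≫ D.y B) ◁ e' ≫ (D.c (L ≫ D.y B)).hom ▷ res) ⊗≫ 𝟙 _ := by
          rw [← whisker_exchange ((D.c (L ≫ D.y B)).hom) e']
      _ = 𝟙 _ ⊗≫ D.y A ◁ adj.unit ⊗≫ (D.c (L ≫ D.y B)).inv ▷ res ⊗≫
            (L ◁ ((D.c (D.y B ≫ res)).hom ≫ D.y B ◁ e')) ⊗≫
            ((D.c (L ≫ D.y B)).hom ▷ res) ⊗≫ 𝟙 _ := by
          bicategory
      _ = 𝟙 _ ⊗≫ D.y A ◁ adj.unit ⊗≫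
            (((D.c (L ≫ D.y B)).inv ≫ (D.c (L ≫ D.y B)).hom) ▷ res) ⊗≫ 𝟙 _ := by
          rw [hclub]; bicategory
      _ = (ρ_ (D.y A)).inv ≫ D.y A ◁ adj.unit := by
          rw [Iso.inv_hom_id]; bicategory
  -- the inverse comparison h : res ⟶ E
  obtain ⟨h, hhdef⟩ : ∃ h' : res ⟶ D.ext (D.y B ≫ res), h' =
      (ρ_ res).inv ≫ (res ◁ hh) ≫
      (α_ res (D.ext (L ≫ D.y B)) (D.ext (D.y B ≫ res))).inv ≫
      (adj.counit ▷ D.ext (D.y B ≫ res)) ≫ (λ_ (D.ext (D.y B ≫ res))).hom := ⟨_, rfl⟩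
  have hhe' : h ≫ e' = 𝟙 res := by
    rw [hhdef]
    calc ((ρ_ res).inv ≫ (res ◁ hh) ≫
          (α_ res (D.ext (L ≫ D.y B)) (D.ext (D.y B ≫ res))).inv ≫
          (adj.counit ▷ D.ext (D.y B ≫ res)) ≫ (λ_ (D.ext (D.y B ≫ res))).hom) ≫ e'
        = 𝟙 _ ⊗≫ res ◁ hh ⊗≫
            (adj.counit ▷ D.ext (D.y B ≫ res) ≫ 𝟙 (D.P B) ◁ e') ⊗≫ 𝟙 _ := by
          bicategory
      _ = 𝟙 _ ⊗≫ res ◁ hh ⊗≫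
            ((res ≫ D.ext (L ≫ D.y B)) ◁ e' ≫ adj.counit ▷ res) ⊗≫ 𝟙 _ := by
          rw [← whisker_exchange adj.counit e']
      _ = 𝟙 _ ⊗≫ res ◁ (hh ≫ D.ext (L ≫ D.y B) ◁ e') ⊗≫ adj.counit ▷ res ⊗≫ 𝟙 _ := by
          bicategory
      _ = 𝟙 _ ⊗≫ (res ◁ adj.unit ≫
            (α_ res (D.ext (L ≫ D.y B)) res).inv ≫ adj.counit ▷ res) ⊗≫ 𝟙 _ := by
          rw [hdiam]; bicategory
      _ = 𝟙 _ ⊗≫ ((ρ_ res).hom ≫ (λ_ res).inv) ⊗≫ 𝟙 _ := by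
          rw [rz]
      _ = 𝟙 res := by bicategory
  have hyBe' : D.y B ◁ e' = (D.c (D.y B ≫ res)).inv :=
    ((D.c (D.y B ≫ res)).hom_comp_eq_id).mp hclub
  have hyBh : D.y B ◁ h = (D.c (D.y B ≫ res)).hom := by
    calc D.y B ◁ h = D.y B ◁ h ≫ (D.y B ◁ e' ≫ (D.c (D.y B ≫ res)).hom) := by
          rw [hyBe', Iso.inv_hom_id, Category.comp_id]
      _ = D.y B ◁ (h ≫ e') ≫ (D.c (D.y B ≫ res)).hom := by
          rw [Bicategory.whiskerLeft_comp, Category.assoc]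
      _ = (D.c (D.y B ≫ res)).hom := by
          rw [hhe', Bicategory.whiskerLeft_id, Category.id_comp]
  have he'h : e' ≫ h = 𝟙 (D.ext (D.y B ≫ res)) := by
    apply (bijE (D.ext (D.y B ≫ res))).injective
    show (D.c (D.y B ≫ res)).hom ≫ D.y B ◁ (e' ≫ h) =
      (D.c (D.y B ≫ res)).hom ≫ D.y B ◁ 𝟙 (D.ext (D.y B ≫ res))
    rw [Bicategory.whiskerLeft_comp, ← Category.assoc, hclub, Category.id_comp, hyBh,
      Bicategory.whiskerLeft_id, Category.comp_id]
  -- Goal 1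
  have G1 : ExhibitsLeftExt (D.y B) (D.y B ≫ res) res (𝟙 (D.y B ≫ res)) := by
    intro M
    have hfun : (fun σ : res ⟶ M => 𝟙 (D.y B ≫ res) ≫ D.y B ◁ σ) =
        fun σ : res ⟶ M => D.y B ◁ σ := by
      funext σ; rw [Category.id_comp]
    rw [hfun]
    constructor
    · intro s t hst
      replace hst : D.y B ◁ s = D.y B ◁ t := hst
      have h2 : e' ≫ s = e' ≫ t := by
        apply (bijE M).injective
        show (D.c (D.y B ≫ res)).hom ≫ D.y B ◁ (e' ≫ s) =
          (D.c (D.y B ≫ res)).hom ≫ D.y B ◁ (e' ≫ t)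
        rw [Bicategory.whiskerLeft_comp, Bicategory.whiskerLeft_comp, ← Category.assoc,
          hclub, Category.id_comp, hst, ← Category.assoc, hclub, Category.id_comp]
      calc s = (h ≫ e') ≫ s := by rw [hhe', Category.id_comp]
        _ = h ≫ e' ≫ t := by rw [Category.assoc, h2]
        _ = t := by rw [← Category.assoc, hhe', Category.id_comp]
    · intro τ
      obtain ⟨t, ht⟩ := (bijE M).2 τ
      replace ht : (D.c (D.y B ≫ res)).hom ≫ D.y B ◁ t = τ := ht
      refine ⟨h ≫ t, ?_⟩
      show D.y B ◁ (h ≫ t) = τ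
      rw [Bicategory.whiskerLeft_comp, hyBh]
      exact ht
  refine ⟨G1, ?_, ?_⟩
  -- Goal 2
  · intro M
    have hfun : (fun σ : 𝟙 (D.P B) ≫ res ⟶ M =>
        (((ρ_ (D.y B)).inv ▷ res) ≫ (α_ (D.y B) (𝟙 (D.P B)) res).hom) ≫ D.y B ◁ σ) =
        (fun σ' : res ⟶ M => 𝟙 (D.y B ≫ res) ≫ D.y B ◁ σ') ∘
          (fun σ : 𝟙 (D.P B) ≫ res ⟶ M => (λ_ res).inv ≫ σ) := by
      funext σ
      show (((ρ_ (D.y B)).inv ▷ res) ≫ (α_ (D.y B) (𝟙 (D.P B)) res).hom) ≫ D.y B ◁ σ =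
        𝟙 (D.y B ≫ res) ≫ D.y B ◁ ((λ_ res).inv ≫ σ)
      rw [triangle_assoc_comp_right_inv, Category.id_comp, Bicategory.whiskerLeft_comp]
    rw [hfun]
    exact (G1 M).comp (bij_precomp_s7 (λ_ res).inv (λ_ res).hom (by simp) (by simp))
  -- Goal 3
  · intro A' G Gb η hext
    have bijG := D.ext_isLeftExt G
    obtain ⟨k, hk⟩ := (bijG Gb).2 η
    replace hk : (D.c G).hom ≫ D.y A' ◁ k = η := hk
    obtain ⟨k', hk'⟩ := (hext (D.ext G)).2 (D.c G).hom
    replace hk' : η ≫ D.y A' ◁ k' = (D.c G).hom := hk'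
    have hkk' : k ≫ k' = 𝟙 (D.ext G) := by
      apply (bijG (D.ext G)).injective
      show (D.c G).hom ≫ D.y A' ◁ (k ≫ k') = (D.c G).hom ≫ D.y A' ◁ 𝟙 (D.ext G)
      rw [Bicategory.whiskerLeft_comp, ← Category.assoc, hk, hk',
        Bicategory.whiskerLeft_id, Category.comp_id]
    have hk'k : k' ≫ k = 𝟙 Gb := by
      apply (hext Gb).injective
      show η ≫ D.y A' ◁ (k' ≫ k) = η ≫ D.y A' ◁ 𝟙 Gb
      rw [Bicategory.whiskerLeft_comp, ← Category.assoc, hk', hk,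
        Bicategory.whiskerLeft_id, Category.comp_id]
    have bijGE := D.ext_respects G (D.y B ≫ res)
    intro M
    have key : ∀ σ : Gb ≫ res ⟶ M,
        (G ◁ h) ≫ ((((D.c G).hom ▷ D.ext (D.y B ≫ res)) ≫
          (α_ (D.y A') (D.ext G) (D.ext (D.y B ≫ res))).hom) ≫
          D.y A' ◁ (((D.ext G ◁ e') ≫ (k ▷ res)) ≫ σ)) =
        ((η ▷ res) ≫ (α_ (D.y A') Gb res).hom) ≫ D.y A' ◁ σ := by
      intro σ
      calc (G ◁ h) ≫ ((((D.c G).hom ▷ D.ext (D.y B ≫ res)) ≫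
            (α_ (D.y A') (D.ext G) (D.ext (D.y B ≫ res))).hom) ≫
            D.y A' ◁ (((D.ext G ◁ e') ≫ (k ▷ res)) ≫ σ))
          = G ◁ h ⊗≫ ((D.c G).hom ▷ D.ext (D.y B ≫ res) ≫
              (D.y A' ≫ D.ext G) ◁ e') ⊗≫ (D.y A' ◁ (k ▷ res)) ⊗≫ D.y A' ◁ σ := by
            bicategory
        _ = G ◁ h ⊗≫ (G ◁ e' ≫ (D.c G).hom ▷ res) ⊗≫
              (D.y A' ◁ (k ▷ res)) ⊗≫ D.y A' ◁ σ := by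
            rw [← whisker_exchange ((D.c G).hom) e']
        _ = 𝟙 _ ⊗≫ G ◁ (h ≫ e') ⊗≫ (((D.c G).hom ≫ D.y A' ◁ k) ▷ res) ⊗≫ D.y A' ◁ σ := by
            bicategory
        _ = 𝟙 _ ⊗≫ (η ▷ res) ⊗≫ D.y A' ◁ σ := by
            rw [hhe', hk]; bicategory
        _ = ((η ▷ res) ≫ (α_ (D.y A') Gb res).hom) ≫ D.y A' ◁ σ := by
            bicategory
    have hfun : (fun σ : Gb ≫ res ⟶ M =>
        ((η ▷ res) ≫ (α_ (D.y A') Gb res).hom) ≫ D.y A' ◁ σ) =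
        (fun τ : G ≫ D.ext (D.y B ≫ res) ⟶ D.y A' ≫ M => (G ◁ h) ≫ τ) ∘
        (fun t : D.ext G ≫ D.ext (D.y B ≫ res) ⟶ M =>
          (((D.c G).hom ▷ D.ext (D.y B ≫ res)) ≫
            (α_ (D.y A') (D.ext G) (D.ext (D.y B ≫ res))).hom) ≫ D.y A' ◁ t) ∘
        (fun σ : Gb ≫ res ⟶ M => ((D.ext G ◁ e') ≫ (k ▷ res)) ≫ σ) := by
      funext σ
      exact (key σ).symm
    rw [hfun]
    have hx : ((D.ext G ◁ e') ≫ (k ▷ res)) ≫ ((k' ▷ res) ≫ (D.ext G ◁ h)) =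
        𝟙 (D.ext G ≫ D.ext (D.y B ≫ res)) := by
      calc ((D.ext G ◁ e') ≫ (k ▷ res)) ≫ ((k' ▷ res) ≫ (D.ext G ◁ h))
          = (D.ext G ◁ e') ≫ ((k ≫ k') ▷ res) ≫ (D.ext G ◁ h) := by
            rw [Bicategory.comp_whiskerRight]; simp only [Category.assoc]
        _ = (D.ext G ◁ e') ≫ (D.ext G ◁ h) := by
            rw [hkk', Bicategory.id_whiskerRight, Category.id_comp]
        _ = 𝟙 _ := by rw [← Bicategory.whiskerLeft_comp, he'h, Bicategory.whiskerLeft_id]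
    have hx' : ((k' ▷ res) ≫ (D.ext G ◁ h)) ≫ ((D.ext G ◁ e') ≫ (k ▷ res)) =
        𝟙 (Gb ≫ res) := by
      calc ((k' ▷ res) ≫ (D.ext G ◁ h)) ≫ ((D.ext G ◁ e') ≫ (k ▷ res))
          = (k' ▷ res) ≫ (D.ext G ◁ (h ≫ e')) ≫ (k ▷ res) := by
            rw [Bicategory.whiskerLeft_comp]; simp only [Category.assoc]
        _ = (k' ▷ res) ≫ (k ▷ res) := by
            rw [hhe', Bicategory.whiskerLeft_id, Category.id_comp]
        _ = 𝟙 _ := by rw [← Bicategory.comp_whiskerRight, hk'k, Bicategory.id_whiskerRight]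
    have houter : (G ◁ h) ≫ (G ◁ e') = 𝟙 (G ≫ res) := by
      rw [← Bicategory.whiskerLeft_comp, hhe', Bicategory.whiskerLeft_id]
    have houter' : (G ◁ e') ≫ (G ◁ h) = 𝟙 (G ≫ D.ext (D.y B ≫ res)) := by
      rw [← Bicategory.whiskerLeft_comp, he'h, Bicategory.whiskerLeft_id]
    exact (bij_precomp_s7 (G ◁ h) (G ◁ e') houter houter').comp
      ((bijGE M).comp
        (bij_precomp_s7 ((D.ext G ◁ e') ≫ (k ▷ res)) ((k' ▷ res) ≫ (D.ext G ◁ h)) hx hx'))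
end

section
/- Let (P, y) be a KZ doctrine on a 2-category 𝒞, let L : A ⟶ B be a 1-cell such that PL := lan_L has a right adjoint res_L with unit η, let X be a P-cocomplete object, and let H : A ⟶ X with left extension H̄ : PA ⟶ X of H along y_A exhibited by the invertible 2-cell c_H. Then the composite 2-cell H ⟶ H̄·y_A ⟶ H̄·res_L·PL·y_A ⟶ H̄·res_L·y_B·L, obtained by pasting c_H, the unit η (suitably whiskered), and the isomorphism y_L : PL·y_A ⟶ y_B·L (whiskered by H̄·res_L), exhibits H̄·res_L·y_B as a left extension of H along L. -/
open CategoryTheory Bicategory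

universe w v u

variable {𝒞 : Type u} [Bicategory.{w, v} 𝒞]

lemma exhibits_of_iso {a b c : 𝒞} {L : a ⟶ b} {I I' : a ⟶ c} {R R' : b ⟶ c}
    {η : I ⟶ L ≫ R} (h : ExhibitsLeftExt L I R η) (i : R ≅ R') (j : I' ≅ I)
    {η' : I' ⟶ L ≫ R'} (e : j.hom ≫ η ≫ L ◁ i.hom = η') :
    ExhibitsLeftExt L I' R' η' := by
  intro M
  have key : (fun σ : R' ⟶ M => η' ≫ L ◁ σ)
      = (fun τ : I ⟶ L ≫ M => j.hom ≫ τ) ∘ (fun σ : R ⟶ M => η ≫ L ◁ σ)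
        ∘ (fun σ : R' ⟶ M => i.hom ≫ σ) := by
    funext σ
    simp [← e]
  rw [key]
  exact (Equiv.mk (fun τ : I ⟶ L ≫ M => j.hom ≫ τ) (fun τ => j.inv ≫ τ)
      (by intro τ; simp) (by intro τ; simp)).bijective.comp
    ((h M).comp (Equiv.mk (fun σ : R' ⟶ M => i.hom ≫ σ) (fun σ => i.inv ≫ σ)
      (by intro σ; simp) (by intro σ; simp)).bijective)

lemma mate_bijective {a b z : 𝒞} {f : a ⟶ b} {g : b ⟶ a} (adj : Adjunction f g)
    (K : a ⟶ z) (N : b ⟶ z) :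
    Function.Bijective (fun δ : g ≫ K ⟶ N =>
      (λ_ K).inv ≫ adj.unit ▷ K ≫ (α_ f g K).hom ≫ f ◁ δ) := by
  rw [Function.bijective_iff_has_inverse]
  refine ⟨fun θ => g ◁ θ ≫ (α_ g f N).inv ≫ adj.counit ▷ N ≫ (λ_ N).hom, ?_, ?_⟩
  · intro δ
    calc g ◁ ((λ_ K).inv ≫ adj.unit ▷ K ≫ (α_ f g K).hom ≫ f ◁ δ) ≫
          (α_ g f N).inv ≫ adj.counit ▷ N ≫ (λ_ N).hom
        = 𝟙 _ ⊗≫ g ◁ adj.unit ▷ K ⊗≫ ((g ≫ f) ◁ δ ≫ adj.counit ▷ N) ⊗≫ 𝟙 _ := by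
          bicategory
      _ = 𝟙 _ ⊗≫ g ◁ adj.unit ▷ K ⊗≫ (adj.counit ▷ (g ≫ K) ≫ 𝟙 b ◁ δ) ⊗≫ 𝟙 _ := by
          rw [whisker_exchange]
      _ = 𝟙 _ ⊗≫ rightZigzag adj.unit adj.counit ▷ K ⊗≫ δ := by
          dsimp only [rightZigzag]; bicategory
      _ = δ := by rw [adj.right_triangle]; bicategory
  · intro θ
    calc (λ_ K).inv ≫ adj.unit ▷ K ≫ (α_ f g K).hom ≫
          f ◁ (g ◁ θ ≫ (α_ g f N).inv ≫ adj.counit ▷ N ≫ (λ_ N).hom)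
        = 𝟙 _ ⊗≫ (adj.unit ▷ K ≫ (f ≫ g) ◁ θ) ⊗≫ f ◁ adj.counit ▷ N ⊗≫ 𝟙 _ := by
          bicategory
      _ = 𝟙 _ ⊗≫ (𝟙 a ◁ θ ≫ adj.unit ▷ (f ≫ N)) ⊗≫ f ◁ adj.counit ▷ N ⊗≫ 𝟙 _ := by
          rw [← whisker_exchange]
      _ = θ ⊗≫ leftZigzag adj.unit adj.counit ▷ N ⊗≫ 𝟙 _ := by
          dsimp only [leftZigzag]; bicategory
      _ = θ := by rw [adj.left_triangle]; bicategory

lemma unit_whisker_inj {a b : 𝒞} {f : a ⟶ b} {g : b ⟶ a} (adj : Adjunction f g)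
    (N : b ⟶ a) (θ₁ θ₂ : g ⟶ N)
    (h : adj.unit ≫ f ◁ θ₁ = adj.unit ≫ f ◁ θ₂) : θ₁ = θ₂ := by
  have key : ∀ θ : g ⟶ N,
      (ρ_ g).inv ≫ g ◁ (adj.unit ≫ f ◁ θ) ≫ (α_ g f N).inv ≫ adj.counit ▷ N ≫ (λ_ N).hom
        = θ := by
    intro θ
    calc (ρ_ g).inv ≫ g ◁ (adj.unit ≫ f ◁ θ) ≫ (α_ g f N).inv ≫ adj.counit ▷ N ≫ (λ_ N).hom
        = 𝟙 _ ⊗≫ g ◁ adj.unit ⊗≫ ((g ≫ f) ◁ θ ≫ adj.counit ▷ N) ⊗≫ 𝟙 _ := by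
          bicategory
      _ = 𝟙 _ ⊗≫ g ◁ adj.unit ⊗≫ (adj.counit ▷ g ≫ 𝟙 b ◁ θ) ⊗≫ 𝟙 _ := by
          rw [whisker_exchange]
      _ = 𝟙 _ ⊗≫ rightZigzag adj.unit adj.counit ⊗≫ θ := by
          dsimp only [rightZigzag]; bicategory
      _ = θ := by rw [adj.right_triangle]; bicategory
  rw [← key θ₁, ← key θ₂, h]

/-- If `lan L ⊣ res` with unit `adj.unit`, `X` is `P`-cocomplete and
`(Hb, c_H)` is a left extension of `H` along `y A`, then the composite 2-cell obtained
by pasting `c_H`, the unit, and `y_L` exhibits `Hb ∘ res ∘ y B` as a left extension of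
`H` along `L`. -/
theorem stmt8 (D : KZDoctrine 𝒞) {A B X : 𝒞} (L : A ⟶ B)
    (res : D.P B ⟶ D.P A) (adj : Bicategory.Adjunction (D.lan L) res)
    (hX : PCocomplete D X) (H : A ⟶ X) (Hb : D.P A ⟶ X) (cH : H ≅ D.y A ≫ Hb)
    (hHb : ExhibitsLeftExt (D.y A) H Hb cH.hom) :
    ExhibitsLeftExt L H (D.y B ≫ res ≫ Hb)
      (cH.hom ≫ (D.y A ◁ (λ_ Hb).inv) ≫ (D.y A ◁ (adj.unit ▷ Hb)) ≫
        (D.y A ◁ (α_ (D.lan L) res Hb).hom) ≫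
        (α_ (D.y A) (D.lan L) (res ≫ Hb)).inv ≫
        ((D.c (L ≫ D.y B)).inv ▷ (res ≫ Hb)) ≫
        (α_ L (D.y B) (res ≫ Hb)).hom) := by
  -- Step 1: identify `Hb` with the chosen extension of `H` coming from cocompleteness of `X`.
  obtain ⟨Gb, cGb, hGb, hGbResp⟩ := hX H
  obtain ⟨k₁, hk₁⟩ := (hGb Hb).2 cH.hom
  obtain ⟨k₂, hk₂⟩ := (hHb Gb).2 cGb.hom
  dsimp only at hk₁ hk₂
  have hk12 : k₁ ≫ k₂ = 𝟙 Gb := by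
    apply (hGb Gb).1
    dsimp only
    simp only [Bicategory.whiskerLeft_comp, Bicategory.whiskerLeft_id, Category.comp_id,
      ← Category.assoc]
    rw [hk₁, hk₂]
  have hk21 : k₂ ≫ k₁ = 𝟙 Hb := by
    apply (hHb Hb).1
    dsimp only
    simp only [Bicategory.whiskerLeft_comp, Bicategory.whiskerLeft_id, Category.comp_id,
      ← Category.assoc]
    rw [hk₂, hk₁]
  -- Step 2: `Hb` respects the chosen left extension of `y B ≫ res` along `y B`.
  have hResp : ExhibitsLeftExt (D.y B) ((D.y B ≫ res) ≫ Hb) (D.ext (D.y B ≫ res) ≫ Hb)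
      (((D.c (D.y B ≫ res)).hom ▷ Hb) ≫ (α_ (D.y B) (D.ext (D.y B ≫ res)) Hb).hom) := by
    refine exhibits_of_iso (hGbResp (D.y B ≫ res))
      (whiskerLeftIso (D.ext (D.y B ≫ res)) (Iso.mk k₁ k₂ hk12 hk21))
      (whiskerLeftIso (D.y B ≫ res) (Iso.mk k₁ k₂ hk12 hk21)).symm ?_
    dsimp only [Iso.symm_hom, whiskerLeftIso_inv, whiskerLeftIso_hom]
    calc (D.y B ≫ res) ◁ k₂ ≫
          ((D.c (D.y B ≫ res)).hom ▷ Gb ≫ (α_ (D.y B) (D.ext (D.y B ≫ res)) Gb).hom) ≫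
          D.y B ◁ D.ext (D.y B ≫ res) ◁ k₁
        = 𝟙 _ ⊗≫ ((D.y B ≫ res) ◁ k₂ ≫ (D.c (D.y B ≫ res)).hom ▷ Gb) ⊗≫
            D.y B ◁ D.ext (D.y B ≫ res) ◁ k₁ := by bicategory
      _ = 𝟙 _ ⊗≫ ((D.c (D.y B ≫ res)).hom ▷ Hb ≫ (D.y B ≫ D.ext (D.y B ≫ res)) ◁ k₂) ⊗≫
            D.y B ◁ D.ext (D.y B ≫ res) ◁ k₁ := by rw [whisker_exchange]
      _ = 𝟙 _ ⊗≫ (D.c (D.y B ≫ res)).hom ▷ Hb ⊗≫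
            D.y B ◁ D.ext (D.y B ≫ res) ◁ (k₂ ≫ k₁) ⊗≫ 𝟙 _ := by bicategory
      _ = (D.c (D.y B ≫ res)).hom ▷ Hb ≫ (α_ (D.y B) (D.ext (D.y B ≫ res)) Hb).hom := by
            rw [hk21]; bicategory
  -- Step 3: the comparison `κ : ext (y B ≫ res) ⟶ res` and its inverse `ψ`.
  obtain ⟨κ, hκ⟩ := (D.ext_isLeftExt (D.y B ≫ res) res).2 (𝟙 (D.y B ≫ res))
  dsimp only at hκ
  have hκ' : D.y B ◁ κ = (D.c (D.y B ≫ res)).inv := (Iso.hom_comp_eq_id _).mp hκ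
  obtain ⟨ψhat, hψhat⟩ := (D.y_selfExt A (D.lan L ≫ D.ext (D.y B ≫ res))).2
    ((ρ_ (D.y A)).inv ≫ D.y A ◁ adj.unit ≫ (α_ (D.y A) (D.lan L) res).inv ≫
      (D.c (L ≫ D.y B)).inv ▷ res ≫ (α_ L (D.y B) res).hom ≫
      L ◁ (D.c (D.y B ≫ res)).hom ≫ (α_ L (D.y B) (D.ext (D.y B ≫ res))).inv ≫
      (D.c (L ≫ D.y B)).hom ▷ D.ext (D.y B ≫ res) ≫
      (α_ (D.y A) (D.lan L) (D.ext (D.y B ≫ res))).hom)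
  dsimp only at hψhat
  set ψ : res ⟶ D.ext (D.y B ≫ res) :=
    (ρ_ res).inv ≫ res ◁ ψhat ≫ (α_ res (D.lan L) (D.ext (D.y B ≫ res))).inv ≫
      adj.counit ▷ D.ext (D.y B ≫ res) ≫ (λ_ (D.ext (D.y B ≫ res))).hom with hψdef
  have hC2a : adj.unit ≫ D.lan L ◁ ψ = ψhat := by
    rw [hψdef]
    calc adj.unit ≫ D.lan L ◁ ((ρ_ res).inv ≫ res ◁ ψhat ≫
          (α_ res (D.lan L) (D.ext (D.y B ≫ res))).inv ≫
          adj.counit ▷ D.ext (D.y B ≫ res) ≫ (λ_ (D.ext (D.y B ≫ res))).hom)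
        = 𝟙 _ ⊗≫ (adj.unit ▷ 𝟙 (D.P A) ≫ (D.lan L ≫ res) ◁ ψhat) ⊗≫
            D.lan L ◁ adj.counit ▷ D.ext (D.y B ≫ res) ⊗≫ 𝟙 _ := by bicategory
      _ = 𝟙 _ ⊗≫ (𝟙 (D.P A) ◁ ψhat ≫ adj.unit ▷ (D.lan L ≫ D.ext (D.y B ≫ res))) ⊗≫
            D.lan L ◁ adj.counit ▷ D.ext (D.y B ≫ res) ⊗≫ 𝟙 _ := by
          rw [← whisker_exchange]
      _ = ψhat ⊗≫ leftZigzag adj.unit adj.counit ▷ D.ext (D.y B ≫ res) ⊗≫ 𝟙 _ := by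
          dsimp only [leftZigzag]; bicategory
      _ = ψhat := by rw [adj.left_triangle]; bicategory
  have hC2b : ψhat ≫ D.lan L ◁ κ = adj.unit := by
    apply (D.y_selfExt A (D.lan L ≫ res)).1
    dsimp only
    calc (ρ_ (D.y A)).inv ≫ D.y A ◁ (ψhat ≫ D.lan L ◁ κ)
        = ((ρ_ (D.y A)).inv ≫ D.y A ◁ ψhat) ≫ D.y A ◁ (D.lan L ◁ κ) := by
          simp only [Bicategory.whiskerLeft_comp, Category.assoc]
      _ = ((ρ_ (D.y A)).inv ≫ D.y A ◁ adj.unit ≫ (α_ (D.y A) (D.lan L) res).inv ≫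
            (D.c (L ≫ D.y B)).inv ▷ res ≫ (α_ L (D.y B) res).hom ≫
            L ◁ (D.c (D.y B ≫ res)).hom ≫ (α_ L (D.y B) (D.ext (D.y B ≫ res))).inv ≫
            (D.c (L ≫ D.y B)).hom ▷ D.ext (D.y B ≫ res) ≫
            (α_ (D.y A) (D.lan L) (D.ext (D.y B ≫ res))).hom) ≫
            D.y A ◁ (D.lan L ◁ κ) := by rw [hψhat]
      _ = 𝟙 _ ⊗≫ D.y A ◁ adj.unit ⊗≫ (D.c (L ≫ D.y B)).inv ▷ res ⊗≫
            L ◁ (D.c (D.y B ≫ res)).hom ⊗≫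
            ((D.c (L ≫ D.y B)).hom ▷ D.ext (D.y B ≫ res) ≫ (D.y A ≫ D.lan L) ◁ κ) ⊗≫
            𝟙 _ := by bicategory
      _ = 𝟙 _ ⊗≫ D.y A ◁ adj.unit ⊗≫ (D.c (L ≫ D.y B)).inv ▷ res ⊗≫
            L ◁ (D.c (D.y B ≫ res)).hom ⊗≫
            ((L ≫ D.y B) ◁ κ ≫ (D.c (L ≫ D.y B)).hom ▷ res) ⊗≫ 𝟙 _ := by
          rw [← whisker_exchange]
      _ = 𝟙 _ ⊗≫ D.y A ◁ adj.unit ⊗≫ (D.c (L ≫ D.y B)).inv ▷ res ⊗≫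
            L ◁ ((D.c (D.y B ≫ res)).hom ≫ D.y B ◁ κ) ⊗≫
            (D.c (L ≫ D.y B)).hom ▷ res ⊗≫ 𝟙 _ := by bicategory
      _ = 𝟙 _ ⊗≫ D.y A ◁ adj.unit ⊗≫
            ((D.c (L ≫ D.y B)).inv ≫ (D.c (L ≫ D.y B)).hom) ▷ res ⊗≫ 𝟙 _ := by
          rw [hκ]; bicategory
      _ = (ρ_ (D.y A)).inv ≫ D.y A ◁ adj.unit := by rw [Iso.inv_hom_id]; bicategory
  have hψκ : ψ ≫ κ = 𝟙 res := by
    refine unit_whisker_inj adj res _ _ ?_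
    rw [Bicategory.whiskerLeft_comp, ← Category.assoc, hC2a, hC2b,
      Bicategory.whiskerLeft_id, Category.comp_id]
  have hyψ : D.y B ◁ ψ = (D.c (D.y B ≫ res)).hom := by
    have h1 : D.y B ◁ ψ ≫ (D.c (D.y B ≫ res)).inv = 𝟙 _ := by
      rw [← hκ', ← Bicategory.whiskerLeft_comp, hψκ, Bicategory.whiskerLeft_id]
    simpa using (Iso.comp_inv_eq _).mp h1
  have hκψ : κ ≫ ψ = 𝟙 (D.ext (D.y B ≫ res)) := by
    apply (D.ext_isLeftExt (D.y B ≫ res) (D.ext (D.y B ≫ res))).1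
    dsimp only
    simp only [Bicategory.whiskerLeft_comp, Bicategory.whiskerLeft_id, Category.comp_id,
      ← Category.assoc]
    rw [hκ, hyψ, Category.id_comp]
  -- Step 4: `res ≫ Hb` is a left extension of its restriction along `y B`, via the identity.
  have hcrux : ExhibitsLeftExt (D.y B) (D.y B ≫ res ≫ Hb) (res ≫ Hb)
      (𝟙 (D.y B ≫ res ≫ Hb)) := by
    refine exhibits_of_iso hResp (whiskerRightIso (Iso.mk κ ψ hκψ hψκ) Hb)
      (α_ (D.y B) res Hb).symm ?_
    dsimp only [Iso.symm_hom, whiskerRightIso_hom]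
    calc (α_ (D.y B) res Hb).inv ≫
          ((D.c (D.y B ≫ res)).hom ▷ Hb ≫ (α_ (D.y B) (D.ext (D.y B ≫ res)) Hb).hom) ≫
          D.y B ◁ (κ ▷ Hb)
        = 𝟙 _ ⊗≫ (((D.c (D.y B ≫ res)).hom ≫ D.y B ◁ κ) ▷ Hb) ⊗≫ 𝟙 _ := by bicategory
      _ = 𝟙 (D.y B ≫ res ≫ Hb) := by rw [hκ]; bicategory
  -- Step 5: assemble the bijections.
  intro M
  obtain ⟨Mb, cM, hMb, -⟩ := hX M
  have bij1 : Function.Bijective (fun σ : D.y B ≫ res ≫ Hb ⟶ M => σ ≫ cM.hom) :=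
    (Equiv.mk (fun σ : D.y B ≫ res ≫ Hb ⟶ M => σ ≫ cM.hom) (fun τ => τ ≫ cM.inv)
      (by intro σ; simp) (by intro τ; simp)).bijective
  set e2 := Equiv.ofBijective _ (hcrux Mb) with he2
  have bij3 := mate_bijective adj Hb Mb
  have bij4 := hHb (D.lan L ≫ Mb)
  have bij5 : Function.Bijective (fun θ : H ⟶ D.y A ≫ (D.lan L ≫ Mb) =>
      θ ≫ (α_ (D.y A) (D.lan L) Mb).inv ≫ (D.c (L ≫ D.y B)).inv ▷ Mb ≫
        (α_ L (D.y B) Mb).hom ≫ L ◁ cM.inv) :=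
    (Equiv.mk (fun θ : H ⟶ D.y A ≫ (D.lan L ≫ Mb) =>
        θ ≫ (α_ (D.y A) (D.lan L) Mb).inv ≫ (D.c (L ≫ D.y B)).inv ▷ Mb ≫
          (α_ L (D.y B) Mb).hom ≫ L ◁ cM.inv)
      (fun θ => θ ≫ L ◁ cM.hom ≫ (α_ L (D.y B) Mb).inv ≫ (D.c (L ≫ D.y B)).hom ▷ Mb ≫
          (α_ (D.y A) (D.lan L) Mb).hom)
      (by intro θ; simp [← Bicategory.whiskerLeft_comp])
      (by intro θ; simp [← Bicategory.whiskerLeft_comp])).bijective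
  have hfun : (fun σ : D.y B ≫ res ≫ Hb ⟶ M =>
      (cH.hom ≫ (D.y A ◁ (λ_ Hb).inv) ≫ (D.y A ◁ (adj.unit ▷ Hb)) ≫
        (D.y A ◁ (α_ (D.lan L) res Hb).hom) ≫
        (α_ (D.y A) (D.lan L) (res ≫ Hb)).inv ≫
        ((D.c (L ≫ D.y B)).inv ▷ (res ≫ Hb)) ≫
        (α_ L (D.y B) (res ≫ Hb)).hom) ≫ L ◁ σ)
      = (fun θ : H ⟶ D.y A ≫ (D.lan L ≫ Mb) =>
          θ ≫ (α_ (D.y A) (D.lan L) Mb).inv ≫ (D.c (L ≫ D.y B)).inv ▷ Mb ≫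
            (α_ L (D.y B) Mb).hom ≫ L ◁ cM.inv)
        ∘ (fun θ : Hb ⟶ D.lan L ≫ Mb => cH.hom ≫ D.y A ◁ θ)
        ∘ (fun δ : res ≫ Hb ⟶ Mb =>
            (λ_ Hb).inv ≫ adj.unit ▷ Hb ≫ (α_ (D.lan L) res Hb).hom ≫ D.lan L ◁ δ)
        ∘ e2.symm ∘ (fun σ : D.y B ≫ res ≫ Hb ⟶ M => σ ≫ cM.hom) := by
    funext σ
    dsimp only [Function.comp]
    have hδ : 𝟙 (D.y B ≫ res ≫ Hb) ≫ D.y B ◁ (e2.symm (σ ≫ cM.hom)) = σ ≫ cM.hom :=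
      e2.apply_symm_apply (σ ≫ cM.hom)
    set δ := e2.symm (σ ≫ cM.hom) with hδdef
    rw [Category.id_comp] at hδ
    have hσ : σ = D.y B ◁ δ ≫ cM.inv := by
      rw [hδ, Category.assoc, Iso.hom_inv_id, Category.comp_id]
    rw [hσ]
    calc (cH.hom ≫ (D.y A ◁ (λ_ Hb).inv) ≫ (D.y A ◁ (adj.unit ▷ Hb)) ≫
          (D.y A ◁ (α_ (D.lan L) res Hb).hom) ≫
          (α_ (D.y A) (D.lan L) (res ≫ Hb)).inv ≫
          ((D.c (L ≫ D.y B)).inv ▷ (res ≫ Hb)) ≫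
          (α_ L (D.y B) (res ≫ Hb)).hom) ≫ L ◁ (D.y B ◁ δ ≫ cM.inv)
        = cH.hom ⊗≫ D.y A ◁ (adj.unit ▷ Hb) ⊗≫
            ((D.c (L ≫ D.y B)).inv ▷ (res ≫ Hb) ≫ (L ≫ D.y B) ◁ δ) ⊗≫ L ◁ cM.inv := by
          bicategory
      _ = cH.hom ⊗≫ D.y A ◁ (adj.unit ▷ Hb) ⊗≫
            ((D.y A ≫ D.lan L) ◁ δ ≫ (D.c (L ≫ D.y B)).inv ▷ Mb) ⊗≫ L ◁ cM.inv := by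
          rw [← whisker_exchange]
      _ = (cH.hom ≫ D.y A ◁ ((λ_ Hb).inv ≫ adj.unit ▷ Hb ≫ (α_ (D.lan L) res Hb).hom ≫
            D.lan L ◁ δ)) ≫ (α_ (D.y A) (D.lan L) Mb).inv ≫
            (D.c (L ≫ D.y B)).inv ▷ Mb ≫ (α_ L (D.y B) Mb).hom ≫ L ◁ cM.inv := by
          bicategory
  rw [hfun]
  exact bij5.comp (bij4.comp (bij3.comp (e2.symm.bijective.comp bij1)))
end

section
/- Let (P, y) be a KZ doctrine on a 2-category 𝒞. Every 1-cell L : A ⟶ B that has a right adjoint in 𝒞 is P-admissible. -/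
open CategoryTheory Bicategory

universe w v u

variable {𝒞 : Type u} [Bicategory.{w, v} 𝒞]

lemma adjExt_aux {a b c : 𝒞} {L : a ⟶ b} {R : b ⟶ a} (adj : Adjunction L R) (G : a ⟶ c) :
    ExhibitsLeftExt L G (R ≫ G) ((λ_ G).inv ≫ adj.unit ▷ G ≫ (α_ L R G).hom) := by
  intro M
  apply Function.bijective_iff_has_inverse.mpr
  refine ⟨fun τ => R ◁ τ ≫ (α_ R L M).inv ≫ adj.counit ▷ M ≫ (λ_ M).hom, ?_, ?_⟩
  · intro σ
    dsimp only
    calc R ◁ (((λ_ G).inv ≫ adj.unit ▷ G ≫ (α_ L R G).hom) ≫ L ◁ σ) ≫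
          (α_ R L M).inv ≫ adj.counit ▷ M ≫ (λ_ M).hom
        = 𝟙 _ ⊗≫ R ◁ adj.unit ▷ G ⊗≫ ((R ≫ L) ◁ σ ≫ adj.counit ▷ M) ⊗≫ 𝟙 _ := by
          bicategory
      _ = 𝟙 _ ⊗≫ (rightZigzag adj.unit adj.counit) ▷ G ⊗≫ σ := by
          rw [whisker_exchange]; bicategory
      _ = 𝟙 _ ⊗≫ ((ρ_ R).hom ≫ (λ_ R).inv) ▷ G ⊗≫ σ := by rw [adj.right_triangle]
      _ = σ := by bicategory
  · intro τ
    dsimp only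
    calc ((λ_ G).inv ≫ adj.unit ▷ G ≫ (α_ L R G).hom) ≫
          L ◁ (R ◁ τ ≫ (α_ R L M).inv ≫ adj.counit ▷ M ≫ (λ_ M).hom)
        = 𝟙 _ ⊗≫ (adj.unit ▷ G ≫ (L ≫ R) ◁ τ) ⊗≫ L ◁ adj.counit ▷ M ⊗≫ 𝟙 _ := by
          bicategory
      _ = 𝟙 _ ⊗≫ τ ⊗≫ (leftZigzag adj.unit adj.counit) ▷ M ⊗≫ 𝟙 _ := by
          rw [← whisker_exchange]; bicategory
      _ = 𝟙 _ ⊗≫ τ ⊗≫ ((λ_ L).hom ≫ (ρ_ L).inv) ▷ M ⊗≫ 𝟙 _ := by rw [adj.left_triangle]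
      _ = τ := by bicategory

lemma exhibits_ofIso_aux {a b c : 𝒞} {L : a ⟶ b} {I : a ⟶ c} {R R' : b ⟶ c}
    {η : I ⟶ L ≫ R} (h : ExhibitsLeftExt L I R η) (e : R ≅ R') {η' : I ⟶ L ≫ R'}
    (hη : η' = η ≫ L ◁ e.hom) : ExhibitsLeftExt L I R' η' := by
  intro M
  have key : (fun σ : R' ⟶ M => η' ≫ L ◁ σ)
      = (fun σ : R ⟶ M => η ≫ L ◁ σ) ∘ (fun σ : R' ⟶ M => e.hom ≫ σ) := by
    funext σ
    simp [hη]
  rw [key]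
  exact (h M).comp ⟨fun σ σ' hs => by simpa using congrArg (fun t => e.inv ≫ t) hs,
    fun σ => ⟨e.inv ≫ σ, by simp⟩⟩

/-- Every left adjoint 1-cell is `P`-admissible. -/
theorem stmt10 (D : KZDoctrine 𝒞) {A B : 𝒞} (L : A ⟶ B) (R : B ⟶ A)
    (adj : Bicategory.Adjunction L R) : PAdmissible D L := by
  refine ⟨R ≫ D.y A, (λ_ (D.y A)).inv ≫ adj.unit ▷ D.y A ≫ (α_ L R (D.y A)).hom,
    adjExt_aux adj (D.y A), ?_⟩
  intro X _ H Hb cH _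
  refine exhibits_ofIso_aux (adjExt_aux adj (D.y A ≫ Hb)) (α_ R (D.y A) Hb).symm ?_
  dsimp only [Iso.symm_hom]
  bicategory
end
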